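/- arXiv:1805.08945 — 3 statements merged into one kernel-verified Lean document; each statement's English description precedes it below -/
import Mathlib

section
/- For every n ≥ 1 the following identity holds in ℤ[t,q]: Σ_{π∈S_n(231)} t^{des π} q^{(13-2)π} = Σ_{k=0}^{⌊(n−1)/2⌋} ( Σ_{π∈T_{n,k}(231)} q^{(13-2)π} ) · t^k (1+t)^{n−1−2k}. -/
open scoped Classical
open Finset

/-- Value of `π` at the 1-indexed position `i`, as a number in `{1,…,n}`;
positions outside `[1,n]` get the boundary value `b`. -/
def pvalB {n : ℕ} (b : ℕ) (π : Equiv.Perm (Fin n)) (i : ℕ) : ℕ :=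
  if h : 1 ≤ i ∧ i ≤ n then (π ⟨i - 1, by omega⟩).val + 1 else b

/-- Value of `π` at the 1-indexed position `i` (boundary value 0). -/
def pval {n : ℕ} (π : Equiv.Perm (Fin n)) : ℕ → ℕ := pvalB 0 π

/-- number of descents -/
def desStat {n : ℕ} (π : Equiv.Perm (Fin n)) : ℕ :=
  ((Finset.Icc 1 (n - 1)).filter fun i => pval π (i + 1) < pval π i).card

/-- number of excedances -/
def excStat {n : ℕ} (π : Equiv.Perm (Fin n)) : ℕ :=
  ((Finset.Icc 1 n).filter fun i => i < pval π i).card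

/-- number of weak excedances -/
def wexStat {n : ℕ} (π : Equiv.Perm (Fin n)) : ℕ :=
  ((Finset.Icc 1 n).filter fun i => i ≤ pval π i).card

/-- number of inversions -/
def invStat {n : ℕ} (π : Equiv.Perm (Fin n)) : ℕ :=
  (((Finset.Icc 1 n) ×ˢ (Finset.Icc 1 n)).filter fun p =>
    p.1 < p.2 ∧ pval π p.2 < pval π p.1).card

/-- number of fixed points -/
def fixStat {n : ℕ} (π : Equiv.Perm (Fin n)) : ℕ :=
  ((Finset.Icc 1 n).filter fun i => pval π i = i).card

/-- number of occurrences of the vincular pattern 31-2: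
pairs (i,j) with i+1 < j ≤ n and π(i+1) < π(j) < π(i) -/
def v31_2 {n : ℕ} (π : Equiv.Perm (Fin n)) : ℕ :=
  (((Finset.Icc 1 n) ×ˢ (Finset.Icc 1 n)).filter fun p =>
    p.1 + 1 < p.2 ∧ pval π (p.1 + 1) < pval π p.2 ∧ pval π p.2 < pval π p.1).card

/-- number of occurrences of the vincular pattern 13-2:
pairs (i,j) with i+1 < j ≤ n and π(i) < π(j) < π(i+1) -/
def v13_2 {n : ℕ} (π : Equiv.Perm (Fin n)) : ℕ :=
  (((Finset.Icc 1 n) ×ˢ (Finset.Icc 1 n)).filter fun p =>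
    p.1 + 1 < p.2 ∧ pval π p.1 < pval π p.2 ∧ pval π p.2 < pval π (p.1 + 1)).card

/-- number of occurrences of the vincular pattern 2-31:
pairs (i,j) with 1 ≤ j < i ≤ n-1 and π(i+1) < π(j) < π(i); here `p = (i, j)` -/
def v2_31 {n : ℕ} (π : Equiv.Perm (Fin n)) : ℕ :=
  (((Finset.Icc 1 (n - 1)) ×ˢ (Finset.Icc 1 (n - 1))).filter fun p =>
    p.2 < p.1 ∧ pval π (p.1 + 1) < pval π p.2 ∧ pval π p.2 < pval π p.1).card

/-- number of occurrences of the vincular pattern 2-13: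
pairs (i,j) with 1 ≤ j < i ≤ n-1 and π(i) < π(j) < π(i+1); here `p = (i, j)` -/
def v2_13 {n : ℕ} (π : Equiv.Perm (Fin n)) : ℕ :=
  (((Finset.Icc 1 (n - 1)) ×ˢ (Finset.Icc 1 (n - 1))).filter fun p =>
    p.2 < p.1 ∧ pval π p.1 < pval π p.2 ∧ pval π p.2 < pval π (p.1 + 1)).card

/-- number of occurrences of the vincular pattern 3-12:
pairs (i,j) with 1 ≤ i < j ≤ n-1 and π(j) < π(j+1) < π(i) -/
def v3_12 {n : ℕ} (π : Equiv.Perm (Fin n)) : ℕ :=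
  (((Finset.Icc 1 (n - 1)) ×ˢ (Finset.Icc 1 (n - 1))).filter fun p =>
    p.1 < p.2 ∧ pval π p.2 < pval π (p.2 + 1) ∧ pval π (p.2 + 1) < pval π p.1).card

/-- number of admissible inversions -/
noncomputable def adiStat {n : ℕ} (π : Equiv.Perm (Fin n)) : ℕ :=
  (((Finset.Icc 1 n) ×ˢ (Finset.Icc 1 n)).filter fun p =>
    p.1 < p.2 ∧ pval π p.2 < pval π p.1 ∧
      ((p.2 < n ∧ pval π p.2 < pval π (p.2 + 1)) ∨
        ∃ l, p.1 < l ∧ l < p.2 ∧ pval π l < pval π p.2)).card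

/-- number of star admissible inversions -/
noncomputable def adiStarStat {n : ℕ} (π : Equiv.Perm (Fin n)) : ℕ :=
  (((Finset.Icc 1 n) ×ˢ (Finset.Icc 1 n)).filter fun p =>
    p.1 < p.2 ∧ pval π p.2 < pval π p.1 ∧
      ((1 < p.1 ∧ pval π (p.1 - 1) < pval π p.1) ∨
        ∃ l, p.1 < l ∧ l < p.2 ∧ pval π p.1 < pval π l)).card

/-- nesting number -/
def nestStat {n : ℕ} (π : Equiv.Perm (Fin n)) : ℕ :=
  (((Finset.Icc 1 n) ×ˢ (Finset.Icc 1 n)).filter fun p =>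
    p.1 < p.2 ∧ p.2 ≤ pval π p.2 ∧ pval π p.2 < pval π p.1).card +
  (((Finset.Icc 1 n) ×ˢ (Finset.Icc 1 n)).filter fun p =>
    p.1 < p.2 ∧ pval π p.2 < pval π p.1 ∧ pval π p.1 < p.1).card

/-- `π` avoids the pattern given (in one-line notation) by the sequence `p` -/
def avoids {n k : ℕ} (π : Equiv.Perm (Fin n)) (p : Fin k → ℕ) : Prop :=
  ¬ ∃ f : Fin k ↪o Fin n, ∀ a b : Fin k, p a < p b ↔ π (f a) < π (f b)

/-- `π` has no double descent, with boundary values `b` at positions 0 and n+1 -/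
def noDD {n : ℕ} (b : ℕ) (π : Equiv.Perm (Fin n)) : Prop :=
  ∀ i, 1 ≤ i → i ≤ n →
    ¬ (pvalB b π i < pvalB b π (i - 1) ∧ pvalB b π (i + 1) < pvalB b π i)

/-- alternating (up-down): π(1) < π(2) > π(3) < π(4) > ⋯ -/
def isAlt {n : ℕ} (π : Equiv.Perm (Fin n)) : Prop :=
  ∀ i, 1 ≤ i → i + 1 ≤ n →
    (Odd i → pval π i < pval π (i + 1)) ∧ (Even i → pval π (i + 1) < pval π i)

/-- down-up: π(1) > π(2) < π(3) > π(4) < ⋯ -/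
def isDownUp {n : ℕ} (π : Equiv.Perm (Fin n)) : Prop :=
  ∀ i, 1 ≤ i → i + 1 ≤ n →
    (Odd i → pval π (i + 1) < pval π i) ∧ (Even i → pval π i < pval π (i + 1))

/-- `i` is a foremaximum of `π` -/
def isForemax {n : ℕ} (π : Equiv.Perm (Fin n)) (i : ℕ) : Prop :=
  1 ≤ i ∧ i ≤ n ∧ (∀ j, 1 ≤ j → j ≤ i → pval π j ≤ pval π i) ∧
    (i = n ∨ pval π i < pval π (i + 1))

/-- coderangement: no foremaximum -/
def isCoderangement {n : ℕ} (π : Equiv.Perm (Fin n)) : Prop :=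
  ∀ i, ¬ isForemax π i

/-- derangement: no fixed point -/
def isDerangement {n : ℕ} (π : Equiv.Perm (Fin n)) : Prop := ∀ i, π i ≠ i

/-- the order-reversing permutation of positions -/
def revPermN (n : ℕ) : Equiv.Perm (Fin n) := ⟨Fin.rev, Fin.rev, Fin.rev_rev, Fin.rev_rev⟩

/-- the reverse of `π`: πʳ(i) = π(n+1-i) -/
def reverseP {n : ℕ} (π : Equiv.Perm (Fin n)) : Equiv.Perm (Fin n) := (revPermN n).trans π

noncomputable def tP : MvPolynomial (Fin 2) ℤ := MvPolynomial.X 0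
noncomputable def qP : MvPolynomial (Fin 2) ℤ := MvPolynomial.X 1

lemma pvalB_in {n b : ℕ} (π : Equiv.Perm (Fin n)) {i : ℕ} (h1 : 1 ≤ i) (h2 : i ≤ n) :
    pvalB b π i = (π ⟨i - 1, by omega⟩).val + 1 := dif_pos ⟨h1, h2⟩

lemma pvalB_out {n b : ℕ} (π : Equiv.Perm (Fin n)) {i : ℕ} (h : ¬ (1 ≤ i ∧ i ≤ n)) :
    pvalB b π i = b := dif_neg h

lemma pval_in {n : ℕ} (π : Equiv.Perm (Fin n)) {i : ℕ} (h1 : 1 ≤ i) (h2 : i ≤ n) :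
    pval π i = (π ⟨i - 1, by omega⟩).val + 1 := pvalB_in π h1 h2

lemma pval_out {n : ℕ} (π : Equiv.Perm (Fin n)) {i : ℕ} (h : ¬ (1 ≤ i ∧ i ≤ n)) :
    pval π i = 0 := pvalB_out π h

lemma pval_le {n : ℕ} (π : Equiv.Perm (Fin n)) (i : ℕ) : pval π i ≤ n := by
  by_cases h : 1 ≤ i ∧ i ≤ n
  · rw [pval_in π h.1 h.2]; exact (π ⟨i - 1, by omega⟩).isLt
  · rw [pval_out π h]; omega

lemma pval_pos {n : ℕ} (π : Equiv.Perm (Fin n)) {i : ℕ} (h1 : 1 ≤ i) (h2 : i ≤ n) :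
    1 ≤ pval π i := by rw [pval_in π h1 h2]; omega

/-- the join construction: σ on positions 1..a with values 1..a, value n at position a+1,
ρ shifted on positions a+2..n with values a+1..n-1 -/
def joinF (a b n : ℕ) (h : a + b + 1 = n) (σ : Equiv.Perm (Fin a)) (ρ : Equiv.Perm (Fin b))
    (i : Fin n) : Fin n :=
  if h1 : (i : ℕ) < a then ⟨σ ⟨i, h1⟩, by have := (σ ⟨i, h1⟩).isLt; omega⟩
  else if h2 : (i : ℕ) = a then ⟨n - 1, by omega⟩
  else ⟨a + ρ ⟨i - (a + 1), by have := i.isLt; omega⟩,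
    by have := (ρ ⟨i - (a + 1), by have := i.isLt; omega⟩).isLt; omega⟩

lemma joinF_val_left (a b n : ℕ) (h : a + b + 1 = n) (σ : Equiv.Perm (Fin a))
    (ρ : Equiv.Perm (Fin b)) (i : Fin n) (x : Fin a) (hx : (x : ℕ) = (i : ℕ)) :
    (joinF a b n h σ ρ i : ℕ) = σ x := by
  have h1 : (i : ℕ) < a := hx ▸ x.isLt
  unfold joinF; rw [dif_pos h1]
  have hmk : (⟨(i : ℕ), h1⟩ : Fin a) = x := Fin.ext hx.symm
  exact congrArg (fun z => ((σ z : Fin a) : ℕ)) hmk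

lemma joinF_val_mid (a b n : ℕ) (h : a + b + 1 = n) (σ : Equiv.Perm (Fin a))
    (ρ : Equiv.Perm (Fin b)) (i : Fin n) (h1 : (i : ℕ) = a) :
    (joinF a b n h σ ρ i : ℕ) = n - 1 := by
  unfold joinF; rw [dif_neg (by omega), dif_pos h1]

lemma joinF_val_right (a b n : ℕ) (h : a + b + 1 = n) (σ : Equiv.Perm (Fin a))
    (ρ : Equiv.Perm (Fin b)) (i : Fin n) (h1 : a < (i : ℕ)) (x : Fin b)
    (hx : (x : ℕ) = (i : ℕ) - (a + 1)) :
    (joinF a b n h σ ρ i : ℕ) = a + ρ x := by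
  unfold joinF; rw [dif_neg (by omega), dif_neg (by omega)]
  have hmk : (⟨(i : ℕ) - (a + 1), by have := i.isLt; omega⟩ : Fin b) = x := Fin.ext hx.symm
  exact congrArg (fun z => a + ((ρ z : Fin b) : ℕ)) hmk

lemma joinF_inj (a b n : ℕ) (h : a + b + 1 = n) (σ : Equiv.Perm (Fin a))
    (ρ : Equiv.Perm (Fin b)) : Function.Injective (joinF a b n h σ ρ) := by
  intro i j hij
  have hv := congrArg Fin.val hij
  have hi := i.isLt; have hj := j.isLt
  rcases lt_trichotomy (i : ℕ) a with h1 | h1 | h1 <;>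
    rcases lt_trichotomy (j : ℕ) a with h2 | h2 | h2
  · rw [joinF_val_left a b n h σ ρ i ⟨i, h1⟩ rfl,
      joinF_val_left a b n h σ ρ j ⟨j, h2⟩ rfl] at hv
    have h3' := congrArg Fin.val (σ.injective (Fin.ext hv))
    have h3 : (i : ℕ) = (j : ℕ) := h3'
    exact Fin.ext h3
  · rw [joinF_val_left a b n h σ ρ i ⟨i, h1⟩ rfl, joinF_val_mid a b n h σ ρ j h2] at hv
    have := (σ (⟨i, h1⟩ : Fin a)).isLt; omega
  · rw [joinF_val_left a b n h σ ρ i ⟨i, h1⟩ rfl,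
      joinF_val_right a b n h σ ρ j h2 ⟨(j : ℕ) - (a + 1), by omega⟩ rfl] at hv
    have := (σ (⟨i, h1⟩ : Fin a)).isLt; omega
  · rw [joinF_val_mid a b n h σ ρ i h1, joinF_val_left a b n h σ ρ j ⟨j, h2⟩ rfl] at hv
    have := (σ (⟨j, h2⟩ : Fin a)).isLt; omega
  · exact Fin.ext (by omega)
  · rw [joinF_val_mid a b n h σ ρ i h1,
      joinF_val_right a b n h σ ρ j h2 ⟨(j : ℕ) - (a + 1), by omega⟩ rfl] at hv
    have := (ρ (⟨(j : ℕ) - (a + 1), by omega⟩ : Fin b)).isLt; omega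
  · rw [joinF_val_right a b n h σ ρ i h1 ⟨(i : ℕ) - (a + 1), by omega⟩ rfl,
      joinF_val_left a b n h σ ρ j ⟨j, h2⟩ rfl] at hv
    have := (ρ (⟨(i : ℕ) - (a + 1), by omega⟩ : Fin b)).isLt; omega
  · rw [joinF_val_right a b n h σ ρ i h1 ⟨(i : ℕ) - (a + 1), by omega⟩ rfl,
      joinF_val_mid a b n h σ ρ j h2] at hv
    have := (ρ (⟨(i : ℕ) - (a + 1), by omega⟩ : Fin b)).isLt; omega
  · rw [joinF_val_right a b n h σ ρ i h1 ⟨(i : ℕ) - (a + 1), by omega⟩ rfl,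
      joinF_val_right a b n h σ ρ j h2 ⟨(j : ℕ) - (a + 1), by omega⟩ rfl] at hv
    have hv2 := Nat.add_left_cancel hv
    have h3' := congrArg Fin.val (ρ.injective (Fin.ext hv2))
    have h3 : (i : ℕ) - (a + 1) = (j : ℕ) - (a + 1) := h3' 
    exact Fin.ext (by omega)

noncomputable def joinP (a b n : ℕ) (σ : Equiv.Perm (Fin a)) (ρ : Equiv.Perm (Fin b)) :
    Equiv.Perm (Fin n) :=
  if h : a + b + 1 = n then
    Equiv.ofBijective _ ((Finite.injective_iff_bijective).mp (joinF_inj a b n h σ ρ))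
  else 1

lemma joinP_apply (a b n : ℕ) (h : a + b + 1 = n) (σ : Equiv.Perm (Fin a))
    (ρ : Equiv.Perm (Fin b)) (i : Fin n) :
    joinP a b n σ ρ i = joinF a b n h σ ρ i := by
  rw [joinP, dif_pos h]; rfl

lemma pval_joinP_left (a b n : ℕ) (h : a + b + 1 = n) (σ : Equiv.Perm (Fin a))
    (ρ : Equiv.Perm (Fin b)) {i : ℕ} (h1 : 1 ≤ i) (h2 : i ≤ a) :
    pval (joinP a b n σ ρ) i = pval σ i := by
  rw [pval_in _ h1 (by omega), pval_in _ h1 h2, joinP_apply a b n h]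
  rw [joinF_val_left a b n h σ ρ _ ⟨i - 1, by omega⟩ rfl]

lemma pval_joinP_mid (a b n : ℕ) (h : a + b + 1 = n) (σ : Equiv.Perm (Fin a))
    (ρ : Equiv.Perm (Fin b)) :
    pval (joinP a b n σ ρ) (a + 1) = n := by
  rw [pval_in _ (by omega) (by omega), joinP_apply a b n h]
  rw [joinF_val_mid a b n h σ ρ _ (show ((⟨a + 1 - 1, by omega⟩ : Fin n) : ℕ) = a by simp)]
  omega

lemma pval_joinP_right (a b n : ℕ) (h : a + b + 1 = n) (σ : Equiv.Perm (Fin a))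
    (ρ : Equiv.Perm (Fin b)) {i : ℕ} (h1 : 1 ≤ i) (h2 : i ≤ b) :
    pval (joinP a b n σ ρ) (a + 1 + i) = a + pval ρ i := by
  rw [pval_in _ (by omega) (by omega), pval_in _ h1 h2, joinP_apply a b n h]
  rw [joinF_val_right a b n h σ ρ ⟨a + 1 + i - 1, by omega⟩ (by simp; omega) ⟨i - 1, by omega⟩
    (by simp only []; omega)]
  omega


lemma Icc_one_eq_Ioc (m : ℕ) : Finset.Icc 1 m = Finset.Ioc 0 m := by
  ext x; simp [Finset.mem_Icc, Finset.mem_Ioc]; omega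

lemma desStat_eq_sum {n : ℕ} (π : Equiv.Perm (Fin n)) :
    desStat π = ∑ i ∈ Finset.Ioc 0 (n - 1), if pval π (i + 1) < pval π i then 1 else 0 := by
  rw [desStat, Finset.card_filter, Icc_one_eq_Ioc]

lemma desStat_joinP (a b n : ℕ) (h : a + b + 1 = n) (σ : Equiv.Perm (Fin a))
    (ρ : Equiv.Perm (Fin b)) :
    desStat (joinP a b n σ ρ) = desStat σ + desStat ρ + (if b = 0 then 0 else 1) := by
  set π := joinP a b n σ ρ with hπ
  rw [desStat_eq_sum π]
  set D : ℕ → ℕ := fun i => if pval π (i + 1) < pval π i then 1 else 0 with hD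
  have hl : ∀ i : ℕ, 1 ≤ i → i ≤ a → pval π i = pval σ i := fun i h1 h2 =>
    pval_joinP_left a b n h σ ρ h1 h2
  have hm : pval π (a + 1) = n := pval_joinP_mid a b n h σ ρ
  have hr : ∀ i : ℕ, 1 ≤ i → i ≤ b → pval π (a + 1 + i) = a + pval ρ i := fun i h1 h2 =>
    pval_joinP_right a b n h σ ρ h1 h2
  have split1 : ∑ i ∈ Finset.Ioc 0 a, D i + ∑ i ∈ Finset.Ioc a (n - 1), D i
      = ∑ i ∈ Finset.Ioc 0 (n - 1), D i :=
    Finset.sum_Ioc_consecutive _ (by omega) (by omega)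
  have split2 : ∑ i ∈ Finset.Ioc 0 (a - 1), D i + ∑ i ∈ Finset.Ioc (a - 1) a, D i
      = ∑ i ∈ Finset.Ioc 0 a, D i :=
    Finset.sum_Ioc_consecutive _ (by omega) (by omega)
  have hL : ∑ i ∈ Finset.Ioc 0 (a - 1), D i = desStat σ := by
    rw [desStat_eq_sum]
    refine Finset.sum_congr rfl fun i hi => ?_
    rw [Finset.mem_Ioc] at hi
    rw [hD]; simp only
    rw [hl i (by omega) (by omega), hl (i + 1) (by omega) (by omega)]
  have hMid : ∑ i ∈ Finset.Ioc (a - 1) a, D i = 0 := by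
    refine Finset.sum_eq_zero fun i hi => ?_
    rw [Finset.mem_Ioc] at hi
    have hia : i = a ∧ 1 ≤ a := by omega
    rw [hD]; simp only
    rw [hia.1, hm, if_neg (by have h1 := pval_le σ a; have h2 := hl a hia.2 le_rfl; omega)]
  have hR : ∑ i ∈ Finset.Ioc a (n - 1), D i = desStat ρ + (if b = 0 then 0 else 1) := by
    rcases Nat.eq_zero_or_pos b with hb | hb
    · have : Finset.Ioc a (n - 1) = ∅ := by
        rw [Finset.Ioc_eq_empty_iff]; omega
      subst hb
      rw [this, Finset.sum_empty]
      simp [desStat]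
    · have split3 : ∑ i ∈ Finset.Ioc a (a + 1), D i + ∑ i ∈ Finset.Ioc (a + 1) (n - 1), D i
          = ∑ i ∈ Finset.Ioc a (n - 1), D i :=
        Finset.sum_Ioc_consecutive _ (by omega) (by omega)
      have h1 : ∑ i ∈ Finset.Ioc a (a + 1), D i = 1 := by
        rw [show Finset.Ioc a (a + 1) = {a + 1} from by
          ext x; rw [Finset.mem_Ioc, Finset.mem_singleton]; omega]
        rw [Finset.sum_singleton, hD]; simp only
        rw [hm, show pval π (a + 1 + 1) = a + pval ρ 1 from hr 1 le_rfl hb]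
        rw [if_pos (by have := pval_le ρ 1; omega)]
      have h2 : ∑ i ∈ Finset.Ioc (a + 1) (n - 1), D i = desStat ρ := by
        rw [desStat_eq_sum]
        rw [show Finset.Ioc (a + 1) (n - 1) = (Finset.Ioc 0 (b - 1)).map
            (addLeftEmbedding (a + 1)) from by
          rw [Finset.map_add_left_Ioc]; congr 1 <;> omega]
        rw [Finset.sum_map]
        refine Finset.sum_congr rfl fun i hi => ?_
        rw [Finset.mem_Ioc] at hi
        have e1 : addLeftEmbedding (a + 1) i = a + 1 + i := rfl
        rw [hD]; simp only [e1]
        rw [show a + 1 + i + 1 = a + 1 + (i + 1) from by omega]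
        rw [hr (i + 1) (by omega) (by omega), hr i (by omega) (by omega)]
        simp only [Nat.add_lt_add_iff_left]
      rw [if_neg (by omega : ¬ b = 0)]
      omega
  rw [← split1, ← split2]
  omega


lemma v13_2_eq_sum {n : ℕ} (π : Equiv.Perm (Fin n)) :
    v13_2 π = ∑ i ∈ Finset.Ioc 0 n, ∑ j ∈ Finset.Ioc 0 n,
      if i + 1 < j ∧ pval π i < pval π j ∧ pval π j < pval π (i + 1) then 1 else 0 := by
  rw [v13_2, Finset.card_filter, Finset.sum_product, Icc_one_eq_Ioc]

lemma v13_2_joinP (a b n : ℕ) (h : a + b + 1 = n) (σ : Equiv.Perm (Fin a))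
    (ρ : Equiv.Perm (Fin b)) :
    v13_2 (joinP a b n σ ρ) = v13_2 σ + v13_2 ρ + (if a = 0 then 0 else b) := by
  set π := joinP a b n σ ρ with hπ
  have hl : ∀ i : ℕ, 1 ≤ i → i ≤ a → pval π i = pval σ i := fun i h1 h2 =>
    pval_joinP_left a b n h σ ρ h1 h2
  have hm : pval π (a + 1) = n := pval_joinP_mid a b n h σ ρ
  have hr : ∀ i : ℕ, 1 ≤ i → i ≤ b → pval π (a + 1 + i) = a + pval ρ i := fun i h1 h2 =>
    pval_joinP_right a b n h σ ρ h1 h2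
  have hr' : ∀ j : ℕ, a + 2 ≤ j → j ≤ n → pval π j = a + pval ρ (j - (a + 1)) := by
    intro j h1 h2
    have := hr (j - (a + 1)) (by omega) (by omega)
    rwa [show a + 1 + (j - (a + 1)) = j from by omega] at this
  rw [v13_2_eq_sum π]
  set χ : ℕ → ℕ → ℕ := fun i j =>
    if i + 1 < j ∧ pval π i < pval π j ∧ pval π j < pval π (i + 1) then 1 else 0 with hχ
  set χσ : ℕ → ℕ → ℕ := fun i j =>
    if i + 1 < j ∧ pval σ i < pval σ j ∧ pval σ j < pval σ (i + 1) then 1 else 0 with hχσ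
  set χρ : ℕ → ℕ → ℕ := fun i j =>
    if i + 1 < j ∧ pval ρ i < pval ρ j ∧ pval ρ j < pval ρ (i + 1) then 1 else 0 with hχρ
  -- inner sum for i in the left block (1 ≤ i ≤ a-1)
  have inner_left : ∀ i : ℕ, 1 ≤ i → i + 1 ≤ a →
      ∑ j ∈ Finset.Ioc 0 n, χ i j = ∑ j ∈ Finset.Ioc 0 a, χσ i j := by
    intro i hi1 hi2
    rw [← Finset.sum_Ioc_consecutive _ (by omega : (0:ℕ) ≤ a) (by omega : a ≤ n)]
    have z1 : ∑ j ∈ Finset.Ioc a n, χ i j = 0 := by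
      refine Finset.sum_eq_zero fun j hj => ?_
      rw [Finset.mem_Ioc] at hj
      rw [hχ]; simp only
      rcases Nat.eq_or_lt_of_le (Nat.succ_le_of_lt hj.1) with hj2 | hj2
      · rw [if_neg]; rintro ⟨-, -, h3⟩
        rw [← hj2, hm, hl (i+1) (by omega) (by omega)] at h3
        have := pval_le σ (i+1); omega
      · rw [if_neg]; rintro ⟨-, -, h3⟩
        rw [hr' j (by omega) (by omega), hl (i+1) (by omega) (by omega)] at h3
        have := pval_le σ (i+1)
        have := pval_pos ρ (show 1 ≤ j - (a+1) by omega) (show j - (a+1) ≤ b by omega)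
        omega
    rw [z1, add_zero]
    refine Finset.sum_congr rfl fun j hj => ?_
    rw [Finset.mem_Ioc] at hj
    rw [hχ, hχσ]; simp only
    rw [hl i (by omega) (by omega), hl (i+1) (by omega) (by omega), hl j (by omega) (by omega)]
  -- inner sum for i = a (when a ≥ 1)
  have inner_a : 1 ≤ a → ∑ j ∈ Finset.Ioc 0 n, χ a j = b := by
    intro ha
    rw [← Finset.sum_Ioc_consecutive _ (by omega : (0:ℕ) ≤ a + 1) (by omega : a + 1 ≤ n)]
    have z1 : ∑ j ∈ Finset.Ioc 0 (a+1), χ a j = 0 := by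
      refine Finset.sum_eq_zero fun j hj => ?_
      rw [Finset.mem_Ioc] at hj
      rw [hχ]; simp only
      rw [if_neg]; rintro ⟨h1, -, -⟩; omega
    have z2 : ∑ j ∈ Finset.Ioc (a+1) n, χ a j = b := by
      have : ∀ j ∈ Finset.Ioc (a+1) n, χ a j = 1 := by
        intro j hj
        rw [Finset.mem_Ioc] at hj
        rw [hχ]; simp only
        rw [if_pos]
        refine ⟨by omega, ?_, ?_⟩
        · rw [hl a (by omega) (by omega), hr' j (by omega) (by omega)]
          have := pval_le σ a
          have := pval_pos ρ (show 1 ≤ j - (a+1) by omega) (show j - (a+1) ≤ b by omega)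
          omega
        · rw [hm, hr' j (by omega) (by omega)]
          have := pval_le ρ (j - (a+1))
          omega
      rw [Finset.sum_congr rfl this, Finset.sum_const, smul_eq_mul, mul_one, Nat.card_Ioc]
      omega
    omega
  -- inner sum for i = a + 1
  have inner_mid : ∑ j ∈ Finset.Ioc 0 n, χ (a+1) j = 0 := by
    refine Finset.sum_eq_zero fun j hj => ?_
    rw [hχ]; simp only
    rw [if_neg]; rintro ⟨-, h2, -⟩
    rw [hm] at h2
    have := pval_le π j
    omega
  -- inner sum for i in the right block
  have inner_right : ∀ i : ℕ, a + 2 ≤ i → i ≤ n →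
      ∑ j ∈ Finset.Ioc 0 n, χ i j = ∑ j ∈ Finset.Ioc 0 b, χρ (i - (a+1)) j := by
    intro i hi1 hi2
    rw [← Finset.sum_Ioc_consecutive _ (by omega : (0:ℕ) ≤ a + 1) (by omega : a + 1 ≤ n)]
    have z1 : ∑ j ∈ Finset.Ioc 0 (a+1), χ i j = 0 := by
      refine Finset.sum_eq_zero fun j hj => ?_
      rw [Finset.mem_Ioc] at hj
      rw [hχ]; simp only
      rcases Nat.eq_or_lt_of_le hj.2 with hj2 | hj2
      · rw [if_neg]; rintro ⟨-, -, h3⟩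
        rw [hj2, hm] at h3
        have := pval_le π (i+1)
        omega
      · rw [if_neg]; rintro ⟨-, h2, -⟩
        rw [hr' i (by omega) (by omega), hl j (by omega) (by omega)] at h2
        have := pval_le σ j
        have := pval_pos ρ (show 1 ≤ i - (a+1) by omega) (show i - (a+1) ≤ b by omega)
        omega
    rw [z1, zero_add]
    rw [show Finset.Ioc (a+1) n = (Finset.Ioc 0 b).map (addLeftEmbedding (a + 1)) from by
      rw [Finset.map_add_left_Ioc]; congr 1 <;> omega]
    rw [Finset.sum_map]
    refine Finset.sum_congr rfl fun j hj => ?_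
    rw [Finset.mem_Ioc] at hj
    have e1 : addLeftEmbedding (a + 1) j = a + 1 + j := rfl
    rw [hχ, hχρ]; simp only [e1]
    set i' := i - (a + 1) with hi'
    have hpi : pval π i = a + pval ρ i' := hr' i (by omega) (by omega)
    have hpj : pval π (a + 1 + j) = a + pval ρ j := hr j (by omega) (by omega)
    rcases Nat.eq_or_lt_of_le hi2 with hin | hin
    · -- i = n : both third conditions are false
      have hz1 : pval π (i + 1) = 0 := pval_out π (by omega)
      have hz2 : pval ρ (i' + 1) = 0 := pval_out ρ (by omega)
      rw [hpi, hpj, hz1, hz2]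
      rw [if_neg (by rintro ⟨-, -, h3⟩; omega), if_neg (by rintro ⟨-, -, h3⟩; omega)]
    · have hps : pval π (i + 1) = a + pval ρ (i' + 1) := by
        have := hr (i' + 1) (by omega) (by omega)
        rwa [show a + 1 + (i' + 1) = i + 1 from by omega] at this
      rw [hpi, hpj, hps]
      by_cases hc : i' + 1 < j ∧ pval ρ i' < pval ρ j ∧ pval ρ j < pval ρ (i' + 1)
      · rw [if_pos (by constructor; omega; constructor <;> omega), if_pos hc]
      · rw [if_neg, if_neg hc]
        intro hcc
        exact hc ⟨by omega, by omega, by omega⟩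
  -- now assemble the outer sum
  have split1 : ∑ i ∈ Finset.Ioc 0 (a-1), (∑ j ∈ Finset.Ioc 0 n, χ i j)
        + ∑ i ∈ Finset.Ioc (a-1) a, (∑ j ∈ Finset.Ioc 0 n, χ i j)
      = ∑ i ∈ Finset.Ioc 0 a, (∑ j ∈ Finset.Ioc 0 n, χ i j) :=
    Finset.sum_Ioc_consecutive _ (by omega) (by omega)
  have split2 : ∑ i ∈ Finset.Ioc 0 a, (∑ j ∈ Finset.Ioc 0 n, χ i j)
        + ∑ i ∈ Finset.Ioc a (a+1), (∑ j ∈ Finset.Ioc 0 n, χ i j)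
      = ∑ i ∈ Finset.Ioc 0 (a+1), (∑ j ∈ Finset.Ioc 0 n, χ i j) :=
    Finset.sum_Ioc_consecutive _ (by omega) (by omega)
  have split3 : ∑ i ∈ Finset.Ioc 0 (a+1), (∑ j ∈ Finset.Ioc 0 n, χ i j)
        + ∑ i ∈ Finset.Ioc (a+1) n, (∑ j ∈ Finset.Ioc 0 n, χ i j)
      = ∑ i ∈ Finset.Ioc 0 n, (∑ j ∈ Finset.Ioc 0 n, χ i j) :=
    Finset.sum_Ioc_consecutive _ (by omega) (by omega)
  have hLpart : ∑ i ∈ Finset.Ioc 0 (a-1), (∑ j ∈ Finset.Ioc 0 n, χ i j) = v13_2 σ := by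
    rw [v13_2_eq_sum σ]
    have ext1 : ∑ i ∈ Finset.Ioc 0 a, ∑ j ∈ Finset.Ioc 0 a, χσ i j
        = ∑ i ∈ Finset.Ioc 0 (a-1), ∑ j ∈ Finset.Ioc 0 a, χσ i j := by
      rw [← Finset.sum_Ioc_consecutive _ (by omega : (0:ℕ) ≤ a - 1) (by omega : a - 1 ≤ a)]
      have : ∑ i ∈ Finset.Ioc (a-1) a, ∑ j ∈ Finset.Ioc 0 a, χσ i j = 0 := by
        refine Finset.sum_eq_zero fun i hi => Finset.sum_eq_zero fun j hj => ?_
        rw [Finset.mem_Ioc] at hi hj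
        rw [hχσ]; simp only
        rw [if_neg]; rintro ⟨h1, -, -⟩; omega
      rw [this, add_zero]
    rw [ext1]
    exact Finset.sum_congr rfl fun i hi => by
      rw [Finset.mem_Ioc] at hi
      exact inner_left i (by omega) (by omega)
  have hMidpart : ∑ i ∈ Finset.Ioc (a-1) a, (∑ j ∈ Finset.Ioc 0 n, χ i j)
      = (if a = 0 then 0 else b) := by
    rcases Nat.eq_zero_or_pos a with ha | ha
    · rw [ha]; simp
    · rw [if_neg (by omega)]
      rw [show Finset.Ioc (a-1) a = {a} from by
        ext x; rw [Finset.mem_Ioc, Finset.mem_singleton]; omega]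
      rw [Finset.sum_singleton]
      exact inner_a ha
  have hMid2part : ∑ i ∈ Finset.Ioc a (a+1), (∑ j ∈ Finset.Ioc 0 n, χ i j) = 0 := by
    rw [show Finset.Ioc a (a+1) = {a+1} from by
      ext x; rw [Finset.mem_Ioc, Finset.mem_singleton]; omega]
    rw [Finset.sum_singleton]
    exact inner_mid
  have hRpart : ∑ i ∈ Finset.Ioc (a+1) n, (∑ j ∈ Finset.Ioc 0 n, χ i j) = v13_2 ρ := by
    rw [v13_2_eq_sum ρ]
    rw [show Finset.Ioc (a+1) n = (Finset.Ioc 0 b).map (addLeftEmbedding (a + 1)) from by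
      rw [Finset.map_add_left_Ioc]; congr 1 <;> omega]
    rw [Finset.sum_map]
    refine Finset.sum_congr rfl fun i hi => ?_
    rw [Finset.mem_Ioc] at hi
    have e1 : addLeftEmbedding (a + 1) i = a + 1 + i := rfl
    rw [e1]
    have := inner_right (a + 1 + i) (by omega) (by omega)
    rw [this, show a + 1 + i - (a + 1) = i from by omega]
  rw [← split3, ← split2, ← split1, hLpart, hMidpart, hMid2part, hRpart]
  omega


lemma pvalB_eq_pval {n c : ℕ} (π : Equiv.Perm (Fin n)) {i : ℕ} (h1 : 1 ≤ i) (h2 : i ≤ n) :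
    pvalB c π i = pval π i := by rw [pvalB_in π h1 h2, pval_in π h1 h2]

lemma noDD_joinP (a b n : ℕ) (h : a + b + 1 = n) (σ : Equiv.Perm (Fin a))
    (ρ : Equiv.Perm (Fin b)) :
    noDD (n+1) (joinP a b n σ ρ) ↔ ((a = 0 → b = 0) ∧ noDD (a+1) σ ∧ noDD (b+1) ρ) := by
  set π := joinP a b n σ ρ with hπ
  have hl : ∀ i : ℕ, 1 ≤ i → i ≤ a → pval π i = pval σ i := fun i h1 h2 =>
    pval_joinP_left a b n h σ ρ h1 h2
  have hm : pval π (a + 1) = n := pval_joinP_mid a b n h σ ρ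
  have hr : ∀ i : ℕ, 1 ≤ i → i ≤ b → pval π (a + 1 + i) = a + pval ρ i := fun i h1 h2 =>
    pval_joinP_right a b n h σ ρ h1 h2
  have hBj : ∀ i : ℕ, 1 ≤ i → i ≤ n → pvalB (n+1) π i = pval π i := fun i h1 h2 =>
    pvalB_eq_pval π h1 h2
  have hBσ : ∀ i : ℕ, 1 ≤ i → i ≤ a → pvalB (a+1) σ i = pval σ i := fun i h1 h2 =>
    pvalB_eq_pval σ h1 h2
  have hBρ : ∀ i : ℕ, 1 ≤ i → i ≤ b → pvalB (b+1) ρ i = pval ρ i := fun i h1 h2 =>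
    pvalB_eq_pval ρ h1 h2
  have hBj0 : pvalB (n+1) π 0 = n + 1 := pvalB_out π (by omega)
  have hBjn : pvalB (n+1) π (n+1) = n + 1 := pvalB_out π (by omega)
  have hBσ0 : pvalB (a+1) σ 0 = a + 1 := pvalB_out σ (by omega)
  have hBσa : pvalB (a+1) σ (a+1) = a + 1 := pvalB_out σ (by omega)
  have hBρ0 : pvalB (b+1) ρ 0 = b + 1 := pvalB_out ρ (by omega)
  have hBρb : pvalB (b+1) ρ (b+1) = b + 1 := pvalB_out ρ (by omega)
  constructor
  · intro H
    refine ⟨?_, ?_, ?_⟩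
    · -- a = 0 → b = 0
      intro ha0
      by_contra hb0
      refine H 1 (by omega) (by omega) ⟨?_, ?_⟩
      · rw [show (1:ℕ) - 1 = 0 from rfl, hBj0, hBj 1 (by omega) (by omega)]
        have := pval_le π 1; omega
      · rw [hBj 2 (by omega) (by omega), hBj 1 (by omega) (by omega)]
        have h1 : pval π 1 = n := by rw [show (1:ℕ) = a + 1 from by omega]; exact hm
        have h2 : pval π 2 = a + pval ρ 1 := by
          rw [show (2:ℕ) = a + 1 + 1 from by omega]; exact hr 1 (by omega) (by omega)
        have := pval_le ρ 1; omega
    · -- noDD σ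
      intro i hi1 hi2 ⟨c1, c2⟩
      refine H i (by omega) (by omega) ⟨?_, ?_⟩
      · rcases Nat.eq_or_lt_of_le hi1 with hi | hi
        · rw [← hi, show (1:ℕ) - 1 = 0 from rfl, hBj0, hBj 1 (by omega) (by omega)]
          have := pval_le π 1; omega
        · rw [hBj i (by omega) (by omega), hBj (i-1) (by omega) (by omega),
            hl i (by omega) (by omega), hl (i-1) (by omega) (by omega)]
          rwa [hBσ i (by omega) (by omega), hBσ (i-1) (by omega) (by omega)] at c1
      · rcases Nat.eq_or_lt_of_le hi2 with hi | hi
        · exfalso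
          rw [hi, hBσa, hBσ a (by omega) (by omega)] at c2
          have := pval_le σ a; omega
        · rw [hBj (i+1) (by omega) (by omega), hBj i (by omega) (by omega),
            hl (i+1) (by omega) (by omega), hl i (by omega) (by omega)]
          rwa [hBσ (i+1) (by omega) (by omega), hBσ i (by omega) (by omega)] at c2
    · -- noDD ρ
      intro i hi1 hi2 ⟨c1, c2⟩
      refine H (a+1+i) (by omega) (by omega) ⟨?_, ?_⟩
      · rcases Nat.eq_or_lt_of_le hi1 with hi | hi
        · rw [← hi, show a+1+1-1 = a+1 from by omega, hBj (a+1+1) (by omega) (by omega),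
            hBj (a+1) (by omega) (by omega), hm, hr 1 (by omega) (by omega)]
          have := pval_le ρ 1; omega
        · rw [show a+1+i-1 = a+1+(i-1) from by omega, hBj (a+1+i) (by omega) (by omega),
            hBj (a+1+(i-1)) (by omega) (by omega), hr i (by omega) (by omega),
            hr (i-1) (by omega) (by omega)]
          rw [hBρ i (by omega) (by omega), hBρ (i-1) (by omega) (by omega)] at c1
          omega
      · rcases Nat.eq_or_lt_of_le hi2 with hi | hi
        · exfalso
          rw [hi, hBρb, hBρ b (by omega) (by omega)] at c2
          have := pval_le ρ b; omega
        · rw [show a+1+i+1 = a+1+(i+1) from by omega, hBj (a+1+(i+1)) (by omega) (by omega),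
            hBj (a+1+i) (by omega) (by omega), hr (i+1) (by omega) (by omega),
            hr i (by omega) (by omega)]
          rw [hBρ (i+1) (by omega) (by omega), hBρ i (by omega) (by omega)] at c2
          omega
  · rintro ⟨h0, Hσ, Hρ⟩ i hi1 hi2 ⟨c1, c2⟩
    rcases lt_trichotomy i (a+1) with hia | hia | hia
    · -- i ≤ a
      rcases Nat.eq_or_lt_of_le (show i ≤ a by omega) with hie | hie
      · -- i = a : contradiction from c2
        rw [show i + 1 = a + 1 from by omega, hBj (a+1) (by omega) (by omega), hm,
          hBj i (by omega) (by omega), hl i (by omega) (by omega)] at c2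
        have := pval_le σ i; omega
      · refine Hσ i hi1 (by omega) ⟨?_, ?_⟩
        · rcases Nat.eq_or_lt_of_le hi1 with hi | hi
          · rw [← hi, show (1:ℕ) - 1 = 0 from rfl, hBσ0, hBσ 1 (by omega) (by omega)]
            have := pval_le σ 1; omega
          · rw [hBσ i (by omega) (by omega), hBσ (i-1) (by omega) (by omega)]
            rw [hBj i (by omega) (by omega), hBj (i-1) (by omega) (by omega),
              hl i (by omega) (by omega), hl (i-1) (by omega) (by omega)] at c1
            exact c1
        · rw [hBσ (i+1) (by omega) (by omega), hBσ i (by omega) (by omega)]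
          rw [hBj (i+1) (by omega) (by omega), hBj i (by omega) (by omega),
            hl (i+1) (by omega) (by omega), hl i (by omega) (by omega)] at c2
          exact c2
    · -- i = a + 1
      rcases Nat.eq_zero_or_pos a with ha | ha
      · have hb : b = 0 := h0 ha
        have hn : n = 1 := by omega
        rw [show i + 1 = n + 1 from by omega, hBjn, hBj i (by omega) (by omega)] at c2
        have := pval_le π i; omega
      · rw [hia, show a + 1 - 1 = a from by omega, hBj (a+1) (by omega) (by omega), hm,
          hBj a (by omega) (by omega), hl a (by omega) (by omega)] at c1
        have := pval_le σ a; omega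
    · -- i ≥ a + 2
      have hii : i = a + 1 + (i - (a+1)) := by omega
      set i' := i - (a + 1) with hi'
      have hi'1 : 1 ≤ i' := by omega
      have hi'b : i' ≤ b := by omega
      rcases Nat.eq_or_lt_of_le hi'b with hie | hie
      · -- i = n : contradiction from c2
        rw [show i + 1 = n + 1 from by omega, hBjn, hBj i (by omega) (by omega)] at c2
        have := pval_le π i; omega
      · refine Hρ i' hi'1 (by omega) ⟨?_, ?_⟩
        · rcases Nat.eq_or_lt_of_le hi'1 with hi3 | hi3
          · rw [← hi3, show (1:ℕ) - 1 = 0 from rfl, hBρ0, hBρ 1 (by omega) (by omega)]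
            have := pval_le ρ 1; omega
          · rw [hBρ i' (by omega) (by omega), hBρ (i'-1) (by omega) (by omega)]
            rw [hBj i (by omega) (by omega), hBj (i-1) (by omega) (by omega)] at c1
            rw [show i = a + 1 + i' from hii, show a + 1 + i' - 1 = a + 1 + (i' - 1) from by omega,
              hr i' (by omega) (by omega), hr (i'-1) (by omega) (by omega)] at c1
            omega
        · rw [hBρ (i'+1) (by omega) (by omega), hBρ i' (by omega) (by omega)]
          rw [hBj (i+1) (by omega) (by omega), hBj i (by omega) (by omega)] at c2
          rw [show i = a + 1 + i' from hii, show a + 1 + i' + 1 = a + 1 + (i' + 1) from by omega,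
            hr (i'+1) (by omega) (by omega), hr i' (by omega) (by omega)] at c2
          omega


/-- an occurrence of the pattern 231 -/
def occ231 {n : ℕ} (π : Equiv.Perm (Fin n)) : Prop :=
  ∃ i j k : Fin n, i < j ∧ j < k ∧ π k < π i ∧ π i < π j

lemma avoids231_iff {n : ℕ} (π : Equiv.Perm (Fin n)) :
    avoids π ![2,3,1] ↔ ¬ occ231 π := by
  unfold avoids occ231
  apply not_congr
  constructor
  · rintro ⟨f, hf⟩
    refine ⟨f 0, f 1, f 2, f.strictMono (by decide), f.strictMono (by decide), ?_, ?_⟩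
    · exact (hf 2 0).mp (by decide)
    · exact (hf 0 1).mp (by decide)
  · rintro ⟨i, j, k, h1, h2, h3, h4⟩
    have hsm : StrictMono (![i, j, k] : Fin 3 → Fin n) := by
      intro x y hxy
      fin_cases x <;> fin_cases y <;>
        first
          | exact absurd hxy (by decide)
          | simpa using h1
          | simpa using h2
          | simpa using (h1.trans h2)
    refine ⟨OrderEmbedding.ofStrictMono _ hsm, ?_⟩
    intro x y
    have e : ∀ z, (OrderEmbedding.ofStrictMono (![i, j, k] : Fin 3 → Fin n) hsm) z
        = ![i, j, k] z := fun z => rfl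
    fin_cases x <;> fin_cases y <;> simp only [e]
    · exact iff_of_false (by decide) (lt_irrefl _)
    · exact iff_of_true (by decide) h4
    · exact iff_of_false (by decide) (asymm h3)
    · exact iff_of_false (by decide) (asymm h4)
    · exact iff_of_false (by decide) (lt_irrefl _)
    · exact iff_of_false (by decide) (asymm (h3.trans h4))
    · exact iff_of_true (by decide) h3
    · exact iff_of_true (by decide) (h3.trans h4)
    · exact iff_of_false (by decide) (lt_irrefl _)

lemma occ231_joinP (a b n : ℕ) (h : a + b + 1 = n) (σ : Equiv.Perm (Fin a))
    (ρ : Equiv.Perm (Fin b)) :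
    occ231 (joinP a b n σ ρ) ↔ occ231 σ ∨ occ231 ρ := by
  have happ : ∀ i : Fin n, joinP a b n σ ρ i = joinF a b n h σ ρ i :=
    joinP_apply a b n h σ ρ
  constructor
  · rintro ⟨I, J, K, h1, h2, h3, h4⟩
    rw [Fin.lt_def] at h1 h2 h3 h4
    rw [happ, happ] at h3
    rw [happ, happ] at h4
    rcases lt_trichotomy (I : ℕ) a with hI | hI | hI
    · -- I in the left block; then K and J also
      left
      have hvI : (joinF a b n h σ ρ I : ℕ) = σ ⟨I, hI⟩ := joinF_val_left a b n h σ ρ I ⟨I, hI⟩ rfl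
      have hK : (K : ℕ) < a := by
        by_contra hK
        rcases Nat.eq_or_lt_of_le (not_lt.mp hK) with hK2 | hK2
        · have := joinF_val_mid a b n h σ ρ K hK2.symm
          rw [this, hvI] at h3
          have := (σ (⟨I, hI⟩ : Fin a)).isLt; omega
        · obtain ⟨k', hk'⟩ : ∃ x : Fin b, (x : ℕ) = (K : ℕ) - (a+1) :=
            ⟨⟨(K : ℕ) - (a+1), by have := K.isLt; omega⟩, rfl⟩
          rw [joinF_val_right a b n h σ ρ K hK2 k' hk', hvI] at h3
          have := (σ (⟨I, hI⟩ : Fin a)).isLt; omega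
      have hJ : (J : ℕ) < a := by omega
      have hvJ : (joinF a b n h σ ρ J : ℕ) = σ ⟨J, hJ⟩ := joinF_val_left a b n h σ ρ J ⟨J, hJ⟩ rfl
      have hvK : (joinF a b n h σ ρ K : ℕ) = σ ⟨K, hK⟩ := joinF_val_left a b n h σ ρ K ⟨K, hK⟩ rfl
      refine ⟨⟨I, hI⟩, ⟨J, hJ⟩, ⟨K, hK⟩, by rw [Fin.lt_def]; exact h1,
        by rw [Fin.lt_def]; exact h2, ?_, ?_⟩
      · rw [Fin.lt_def]; rw [hvK, hvI] at h3; exact h3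
      · rw [Fin.lt_def]; rw [hvI, hvJ] at h4; exact h4
    · -- I is the position of the maximum: impossible
      exfalso
      have := joinF_val_mid a b n h σ ρ I hI
      rw [this] at h4
      have := (joinF a b n h σ ρ J).isLt
      omega
    · -- I in the right block, so are J and K
      right
      have hJ : a < (J : ℕ) := by omega
      have hK : a < (K : ℕ) := by omega
      obtain ⟨i', hi'⟩ : ∃ x : Fin b, (x : ℕ) = (I : ℕ) - (a+1) :=
        ⟨⟨(I : ℕ) - (a+1), by have := I.isLt; omega⟩, rfl⟩
      obtain ⟨j', hj'⟩ : ∃ x : Fin b, (x : ℕ) = (J : ℕ) - (a+1) :=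
        ⟨⟨(J : ℕ) - (a+1), by have := J.isLt; omega⟩, rfl⟩
      obtain ⟨k', hk'⟩ : ∃ x : Fin b, (x : ℕ) = (K : ℕ) - (a+1) :=
        ⟨⟨(K : ℕ) - (a+1), by have := K.isLt; omega⟩, rfl⟩
      have hvI : (joinF a b n h σ ρ I : ℕ) = a + ρ i' := joinF_val_right a b n h σ ρ I hI i' hi'
      have hvJ : (joinF a b n h σ ρ J : ℕ) = a + ρ j' := joinF_val_right a b n h σ ρ J hJ j' hj'
      have hvK : (joinF a b n h σ ρ K : ℕ) = a + ρ k' := joinF_val_right a b n h σ ρ K hK k' hk'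
      refine ⟨i', j', k', ?_, ?_, ?_, ?_⟩
      · rw [Fin.lt_def]; omega
      · rw [Fin.lt_def]; omega
      · rw [Fin.lt_def]; rw [hvK, hvI] at h3; omega
      · rw [Fin.lt_def]; rw [hvI, hvJ] at h4; omega
  · rintro (⟨i, j, k, h1, h2, h3, h4⟩ | ⟨i, j, k, h1, h2, h3, h4⟩)
    · rw [Fin.lt_def] at h1 h2 h3 h4
      obtain ⟨I, hI⟩ : ∃ x : Fin n, (x : ℕ) = (i : ℕ) := ⟨⟨(i : ℕ), by have := i.isLt; omega⟩, rfl⟩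
      obtain ⟨J, hJ⟩ : ∃ x : Fin n, (x : ℕ) = (j : ℕ) := ⟨⟨(j : ℕ), by have := j.isLt; omega⟩, rfl⟩
      obtain ⟨K, hK⟩ : ∃ x : Fin n, (x : ℕ) = (k : ℕ) := ⟨⟨(k : ℕ), by have := k.isLt; omega⟩, rfl⟩
      have hvI : (joinF a b n h σ ρ I : ℕ) = σ i := by
        rw [joinF_val_left a b n h σ ρ I i (by omega)]
      have hvJ : (joinF a b n h σ ρ J : ℕ) = σ j := by
        rw [joinF_val_left a b n h σ ρ J j (by omega)]
      have hvK : (joinF a b n h σ ρ K : ℕ) = σ k := by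
        rw [joinF_val_left a b n h σ ρ K k (by omega)]
      refine ⟨I, J, K, by rw [Fin.lt_def]; omega, by rw [Fin.lt_def]; omega, ?_, ?_⟩
      · rw [Fin.lt_def, happ, happ, hvK, hvI]; exact h3
      · rw [Fin.lt_def, happ, happ, hvI, hvJ]; exact h4
    · rw [Fin.lt_def] at h1 h2 h3 h4
      obtain ⟨I, hI⟩ : ∃ x : Fin n, (x : ℕ) = a + 1 + (i : ℕ) :=
        ⟨⟨a + 1 + (i : ℕ), by have := i.isLt; omega⟩, rfl⟩
      obtain ⟨J, hJ⟩ : ∃ x : Fin n, (x : ℕ) = a + 1 + (j : ℕ) :=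
        ⟨⟨a + 1 + (j : ℕ), by have := j.isLt; omega⟩, rfl⟩
      obtain ⟨K, hK⟩ : ∃ x : Fin n, (x : ℕ) = a + 1 + (k : ℕ) :=
        ⟨⟨a + 1 + (k : ℕ), by have := k.isLt; omega⟩, rfl⟩
      have hvI : (joinF a b n h σ ρ I : ℕ) = a + ρ i :=
        joinF_val_right a b n h σ ρ I (by omega) i (by omega)
      have hvJ : (joinF a b n h σ ρ J : ℕ) = a + ρ j :=
        joinF_val_right a b n h σ ρ J (by omega) j (by omega)
      have hvK : (joinF a b n h σ ρ K : ℕ) = a + ρ k :=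
        joinF_val_right a b n h σ ρ K (by omega) k (by omega)
      refine ⟨I, J, K, by rw [Fin.lt_def]; omega, by rw [Fin.lt_def]; omega, ?_, ?_⟩
      · rw [Fin.lt_def, happ, happ, hvK, hvI]; omega
      · rw [Fin.lt_def, happ, happ, hvI, hvJ]; omega

lemma avoids_joinP (a b n : ℕ) (h : a + b + 1 = n) (σ : Equiv.Perm (Fin a))
    (ρ : Equiv.Perm (Fin b)) :
    avoids (joinP a b n σ ρ) ![2,3,1] ↔ (avoids σ ![2,3,1] ∧ avoids ρ ![2,3,1]) := by
  rw [avoids231_iff, avoids231_iff, avoids231_iff, occ231_joinP a b n h σ ρ, not_or]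

/-- position (0-indexed) of the maximum value -/
noncomputable def aOf {n : ℕ} (π : Equiv.Perm (Fin n)) : ℕ :=
  if h : 1 ≤ n then (π.symm ⟨n - 1, by omega⟩).val else 0

lemma aOf_lt {n : ℕ} (π : Equiv.Perm (Fin n)) (hn : 1 ≤ n) : aOf π < n := by
  unfold aOf; rw [dif_pos hn]; exact (π.symm ⟨n - 1, by omega⟩).isLt

lemma apply_aOf {n : ℕ} (π : Equiv.Perm (Fin n)) (hn : 1 ≤ n) :
    π ⟨aOf π, aOf_lt π hn⟩ = ⟨n - 1, by omega⟩ := by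
  have : (⟨aOf π, aOf_lt π hn⟩ : Fin n) = π.symm ⟨n - 1, by omega⟩ := by
    apply Fin.ext; show aOf π = _; unfold aOf; rw [dif_pos hn]
  rw [this, Equiv.apply_symm_apply]

lemma leftFact {n : ℕ} (π : Equiv.Perm (Fin n)) (hn : 1 ≤ n) (hav : avoids π ![2,3,1]) :
    ∀ i : Fin n, (i : ℕ) < aOf π → (π i).val < aOf π := by
  set a := aOf π with ha
  intro i0 hi0
  by_contra hbad
  -- value at the position of the max
  have hA : π ⟨a, aOf_lt π hn⟩ = ⟨n - 1, by omega⟩ := apply_aOf π hn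
  have han : a < n := aOf_lt π hn
  have hne : (π i0).val ≠ n - 1 := by
    intro hcon
    have h5 : π i0 = π ⟨a, han⟩ := by rw [hA]; exact Fin.ext hcon
    have h6 : (i0 : ℕ) = a := congrArg Fin.val (π.injective h5)
    omega
  -- claim: some position after a has value < a
  have claim : ∃ j : Fin n, a < (j : ℕ) ∧ (π j).val < a := by
    by_contra hgood
    push_neg at hgood
    have hgood' : ∀ j : Fin n, (π j).val < a → (j : ℕ) < a := by
      intro j hj
      rcases lt_trichotomy (j : ℕ) a with hc | hc | hc
      · exact hc
      · exfalso
        have h8 : π j = π ⟨a, han⟩ := by congr 1; exact Fin.ext hc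
        rw [hA] at h8
        have h9 : (π j).val = n - 1 := congrArg Fin.val h8
        omega
      · exact absurd (hgood j hc) (by omega)
    -- the map v ↦ π.symm v on values < a
    have hinj : Function.Injective (fun v : Fin a =>
        (⟨(π.symm ⟨v, by omega⟩).val, hgood' (π.symm ⟨v, by omega⟩)
          (by rw [Equiv.apply_symm_apply]; exact v.isLt)⟩ : Fin a)) := by
      intro v w hvw
      have h1 := congrArg Fin.val hvw
      simp only [] at h1
      have h2 : π.symm ⟨(v : ℕ), by omega⟩ = π.symm ⟨(w : ℕ), by omega⟩ := Fin.ext h1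
      have h3 := congrArg Fin.val (π.symm.injective h2)
      exact Fin.ext h3
    have hsurj := Finite.injective_iff_surjective.mp hinj
    obtain ⟨w, hw⟩ := hsurj ⟨(i0 : ℕ), hi0⟩
    have h1 := congrArg Fin.val hw
    simp only [] at h1
    have h2 : π.symm ⟨(w : ℕ), by omega⟩ = i0 := Fin.ext h1
    have h3 := congrArg π h2
    rw [Equiv.apply_symm_apply] at h3
    have h4 : (w : ℕ) = (π i0).val := congrArg Fin.val h3
    have := w.isLt
    omega
  obtain ⟨j, hj1, hj2⟩ := claim
  rw [avoids231_iff] at hav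
  refine hav ⟨i0, ⟨a, han⟩, j, ?_, ?_, ?_, ?_⟩
  · rw [Fin.lt_def]; exact hi0
  · rw [Fin.lt_def]; exact hj1
  · rw [Fin.lt_def]; omega
  · rw [Fin.lt_def, hA]
    show ((π i0 : Fin n) : ℕ) < n - 1
    have := (π i0).isLt
    omega

lemma rightFact {n : ℕ} (π : Equiv.Perm (Fin n)) (hn : 1 ≤ n) (hav : avoids π ![2,3,1]) :
    ∀ i : Fin n, aOf π < (i : ℕ) → aOf π ≤ (π i).val ∧ (π i).val < n - 1 := by
  set a := aOf π with ha
  have han : a < n := aOf_lt π hn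
  have hA : π ⟨a, han⟩ = ⟨n - 1, by omega⟩ := apply_aOf π hn
  intro i hi
  constructor
  · by_contra hbad
    push_neg at hbad
    -- the map w ↦ π w on positions < a
    have hinj : Function.Injective (fun w : Fin a =>
        (⟨(π ⟨(w : ℕ), by omega⟩).val, leftFact π hn hav ⟨(w : ℕ), by omega⟩ w.isLt⟩ : Fin a)) := by
      intro v w hvw
      have h1 := congrArg Fin.val hvw
      simp only [] at h1
      have h2 : π ⟨(v : ℕ), by omega⟩ = π ⟨(w : ℕ), by omega⟩ := Fin.ext h1
      have h3 := congrArg Fin.val (π.injective h2)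
      exact Fin.ext h3
    have hsurj := Finite.injective_iff_surjective.mp hinj
    obtain ⟨w, hw⟩ := hsurj ⟨(π i).val, hbad⟩
    have h1 := congrArg Fin.val hw
    simp only [] at h1
    have h2 : π ⟨(w : ℕ), by omega⟩ = π i := Fin.ext h1
    have h3 : (w : ℕ) = (i : ℕ) := congrArg Fin.val (π.injective h2)
    have := w.isLt
    omega
  · have h1 : π i ≠ ⟨n - 1, by omega⟩ := by
      intro hcon
      rw [← hA] at hcon
      have h4 : (i : ℕ) = a := congrArg Fin.val (π.injective hcon)
      omega
    have h2 : (π i).val ≠ n - 1 := fun hc => h1 (Fin.ext hc)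
    have := (π i).isLt
    omega

noncomputable def splitL {n : ℕ} (π : Equiv.Perm (Fin n)) (a : ℕ) (ha : a ≤ n)
    (hfact : ∀ i : Fin n, (i : ℕ) < a → (π i).val < a) : Equiv.Perm (Fin a) :=
  Equiv.ofBijective (fun i => ⟨(π ⟨(i : ℕ), by omega⟩).val, hfact _ i.isLt⟩)
    (Finite.injective_iff_bijective.mp (by
      intro v w hvw
      have h1 := congrArg Fin.val hvw
      simp only [] at h1
      have h2 := congrArg Fin.val (π.injective (Fin.ext h1))
      exact Fin.ext h2))

lemma splitL_val {n : ℕ} (π : Equiv.Perm (Fin n)) (a : ℕ) (ha : a ≤ n)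
    (hfact : ∀ i : Fin n, (i : ℕ) < a → (π i).val < a) (i : Fin a) :
    (splitL π a ha hfact i : ℕ) = (π ⟨(i : ℕ), by omega⟩).val := rfl

noncomputable def splitR {n : ℕ} (π : Equiv.Perm (Fin n)) (a b : ℕ) (hab : a + b + 1 = n)
    (hfact : ∀ i : Fin n, a < (i : ℕ) → a ≤ (π i).val ∧ (π i).val < n - 1) :
    Equiv.Perm (Fin b) :=
  Equiv.ofBijective (fun i => ⟨(π ⟨a + 1 + (i : ℕ), by omega⟩).val - a, by
      have := hfact ⟨a + 1 + (i : ℕ), by omega⟩ (by simp only []; omega)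
      omega⟩)
    (Finite.injective_iff_bijective.mp (by
      intro v w hvw
      have h1 := congrArg Fin.val hvw
      simp only [] at h1
      have hv := hfact ⟨a + 1 + (v : ℕ), by omega⟩ (by simp only []; omega)
      have hw := hfact ⟨a + 1 + (w : ℕ), by omega⟩ (by simp only []; omega)
      have h2 : π ⟨a + 1 + (v : ℕ), by omega⟩ = π ⟨a + 1 + (w : ℕ), by omega⟩ :=
        Fin.ext (by omega)
      have h3 := congrArg Fin.val (π.injective h2)
      simp only [] at h3
      exact Fin.ext (by omega)))

lemma splitR_val {n : ℕ} (π : Equiv.Perm (Fin n)) (a b : ℕ) (hab : a + b + 1 = n)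
    (hfact : ∀ i : Fin n, a < (i : ℕ) → a ≤ (π i).val ∧ (π i).val < n - 1) (i : Fin b) :
    (splitR π a b hab hfact i : ℕ) = (π ⟨a + 1 + (i : ℕ), by omega⟩).val - a := rfl

lemma join_split {n : ℕ} (π : Equiv.Perm (Fin n)) (a b : ℕ) (hab : a + b + 1 = n)
    (hmax : π ⟨a, by omega⟩ = ⟨n - 1, by omega⟩)
    (hfl : ∀ i : Fin n, (i : ℕ) < a → (π i).val < a)
    (hfr : ∀ i : Fin n, a < (i : ℕ) → a ≤ (π i).val ∧ (π i).val < n - 1) :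
    joinP a b n (splitL π a (by omega) hfl) (splitR π a b hab hfr) = π := by
  apply Equiv.ext
  intro i
  rw [joinP_apply a b n hab]
  apply Fin.ext
  rcases lt_trichotomy (i : ℕ) a with hc | hc | hc
  · rw [joinF_val_left a b n hab _ _ i ⟨(i : ℕ), hc⟩ rfl, splitL_val]
  · rw [joinF_val_mid a b n hab _ _ i hc]
    have : i = ⟨a, by omega⟩ := Fin.ext hc
    rw [this, hmax]
  · rw [joinF_val_right a b n hab _ _ i hc ⟨(i : ℕ) - (a + 1), by have := i.isLt; omega⟩ rfl,
      splitR_val]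
    have h1 := hfr i hc
    have h2 : (⟨a + 1 + ((i : ℕ) - (a + 1)), by have := i.isLt; omega⟩ : Fin n) = i :=
      Fin.ext (by simp only []; have := i.isLt; omega)
    rw [h2]
    omega

lemma leftFact' {n : ℕ} (π : Equiv.Perm (Fin n)) (hn : 1 ≤ n) (hav : avoids π ![2,3,1])
    {a : ℕ} (haOf : aOf π = a) : ∀ i : Fin n, (i : ℕ) < a → (π i).val < a := by
  subst haOf; exact leftFact π hn hav

lemma rightFact' {n : ℕ} (π : Equiv.Perm (Fin n)) (hn : 1 ≤ n) (hav : avoids π ![2,3,1])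
    {a : ℕ} (haOf : aOf π = a) : ∀ i : Fin n, a < (i : ℕ) → a ≤ (π i).val ∧ (π i).val < n - 1 := by
  subst haOf; exact rightFact π hn hav

lemma apply_aOf' {n : ℕ} (π : Equiv.Perm (Fin n)) (hn : 1 ≤ n) {a : ℕ} (haOf : aOf π = a)
    (ha : a < n) : π ⟨a, ha⟩ = ⟨n - 1, by omega⟩ := by
  subst haOf; exact apply_aOf π hn

noncomputable def splitLT {n : ℕ} (π : Equiv.Perm (Fin n)) (a : ℕ) : Equiv.Perm (Fin a) :=
  if h : a ≤ n ∧ (∀ i : Fin n, (i : ℕ) < a → (π i).val < a) then splitL π a h.1 h.2 else 1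

noncomputable def splitRT {n : ℕ} (π : Equiv.Perm (Fin n)) (a b : ℕ) : Equiv.Perm (Fin b) :=
  if h : (a + b + 1 = n) ∧ (∀ i : Fin n, a < (i : ℕ) → a ≤ (π i).val ∧ (π i).val < n - 1) then
    splitR π a b h.1 h.2 else 1

lemma splitLT_eq {n : ℕ} (π : Equiv.Perm (Fin n)) (a : ℕ) (h1 : a ≤ n)
    (h2 : ∀ i : Fin n, (i : ℕ) < a → (π i).val < a) : splitLT π a = splitL π a h1 h2 :=
  dif_pos ⟨h1, h2⟩

lemma splitRT_eq {n : ℕ} (π : Equiv.Perm (Fin n)) (a b : ℕ) (h1 : a + b + 1 = n)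
    (h2 : ∀ i : Fin n, a < (i : ℕ) → a ≤ (π i).val ∧ (π i).val < n - 1) :
    splitRT π a b = splitR π a b h1 h2 :=
  dif_pos ⟨h1, h2⟩

lemma aOf_joinP (a b n : ℕ) (h : a + b + 1 = n) (σ : Equiv.Perm (Fin a))
    (ρ : Equiv.Perm (Fin b)) : aOf (joinP a b n σ ρ) = a := by
  have hn : 1 ≤ n := by omega
  have hkey : joinP a b n σ ρ ⟨a, by omega⟩ = ⟨n - 1, by omega⟩ := by
    apply Fin.ext
    rw [joinP_apply a b n h, joinF_val_mid a b n h σ ρ _ rfl]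
  unfold aOf; rw [dif_pos hn]
  have h2 : (⟨n - 1, by omega⟩ : Fin n) = joinP a b n σ ρ ⟨a, by omega⟩ := hkey.symm
  rw [h2, Equiv.symm_apply_apply]

lemma splitL_joinP (a b n : ℕ) (h : a + b + 1 = n) (σ : Equiv.Perm (Fin a))
    (ρ : Equiv.Perm (Fin b)) (h1 : a ≤ n)
    (h2 : ∀ i : Fin n, (i : ℕ) < a → ((joinP a b n σ ρ) i).val < a) :
    splitL (joinP a b n σ ρ) a h1 h2 = σ := by
  apply Equiv.ext; intro x; apply Fin.ext
  rw [splitL_val, joinP_apply a b n h, joinF_val_left a b n h σ ρ _ x rfl]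

lemma splitR_joinP (a b n : ℕ) (h : a + b + 1 = n) (σ : Equiv.Perm (Fin a))
    (ρ : Equiv.Perm (Fin b))
    (h2 : ∀ i : Fin n, a < (i : ℕ) → a ≤ ((joinP a b n σ ρ) i).val ∧
      ((joinP a b n σ ρ) i).val < n - 1) :
    splitR (joinP a b n σ ρ) a b h h2 = ρ := by
  apply Equiv.ext; intro x; apply Fin.ext
  rw [splitR_val, joinP_apply a b n h,
    joinF_val_right a b n h σ ρ _ (by simp only []; omega) x (by simp only []; omega)]
  omega

/-- the set of 231-avoiding permutations -/
noncomputable def Aset (m : ℕ) : Finset (Equiv.Perm (Fin m)) :=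
  Finset.univ.filter fun π => avoids π ![2,3,1]

lemma master {M : Type*} [AddCommMonoid M] (n : ℕ) (hn : 1 ≤ n)
    (F : Equiv.Perm (Fin n) → M) :
    ∑ π ∈ Aset n, F π
      = ∑ a ∈ Finset.range n, ∑ p ∈ (Aset a) ×ˢ (Aset (n - 1 - a)),
          F (joinP a (n - 1 - a) n p.1 p.2) := by
  rw [← Finset.sum_fiberwise_of_maps_to (g := aOf) (t := Finset.range n)
    (fun π _ => Finset.mem_range.mpr (aOf_lt π hn))]
  refine Finset.sum_congr rfl fun a ha => ?_
  rw [Finset.mem_range] at ha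
  have hab : a + (n - 1 - a) + 1 = n := by omega
  set b := n - 1 - a with hb
  refine Finset.sum_bij' (fun π _ => (splitLT π a, splitRT π a b))
    (fun p _ => joinP a b n p.1 p.2) ?_ ?_ ?_ ?_ ?_
  · -- hi : splits land in the product
    intro π hπ
    rw [Finset.mem_filter] at hπ
    obtain ⟨hπ1, haOf⟩ := hπ
    rw [Aset, Finset.mem_filter] at hπ1
    have hav := hπ1.2
    have hfl := leftFact' π hn hav haOf
    have hfr := rightFact' π hn hav haOf
    have hmax := apply_aOf' π hn haOf (by omega)
    rw [splitLT_eq π a (by omega) hfl, splitRT_eq π a b hab hfr]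
    have hj : joinP a b n (splitL π a (by omega) hfl) (splitR π a b hab hfr) = π :=
      join_split π a b hab hmax hfl hfr
    have hav2 : avoids (joinP a b n (splitL π a (by omega) hfl) (splitR π a b hab hfr))
        ![2,3,1] := by rw [hj]; exact hav
    have := (avoids_joinP a b n hab _ _).mp hav2
    rw [Finset.mem_product, Aset, Aset, Finset.mem_filter, Finset.mem_filter]
    exact ⟨⟨Finset.mem_univ _, this.1⟩, ⟨Finset.mem_univ _, this.2⟩⟩
  · -- hj : joins land in the fiber
    intro p hp
    rw [Finset.mem_product, Aset, Aset, Finset.mem_filter, Finset.mem_filter] at hp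
    rw [Finset.mem_filter, Aset, Finset.mem_filter]
    exact ⟨⟨Finset.mem_univ _, (avoids_joinP a b n hab _ _).mpr ⟨hp.1.2, hp.2.2⟩⟩,
      aOf_joinP a b n hab _ _⟩
  ·
    intro π hπ
    dsimp only
    rw [Finset.mem_filter] at hπ
    obtain ⟨hπ1, haOf⟩ := hπ
    rw [Aset, Finset.mem_filter] at hπ1
    have hav := hπ1.2
    have hfl := leftFact' π hn hav haOf
    have hfr := rightFact' π hn hav haOf
    have hmax := apply_aOf' π hn haOf (by omega)
    rw [splitLT_eq π a (by omega) hfl, splitRT_eq π a b hab hfr]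
    exact join_split π a b hab hmax hfl hfr
  · -- right_inv : splits of joins recover the pair
    intro p hp
    have haOf := aOf_joinP a b n hab p.1 p.2
    rw [Finset.mem_product, Aset, Aset, Finset.mem_filter, Finset.mem_filter] at hp
    have hav : avoids (joinP a b n p.1 p.2) ![2,3,1] :=
      (avoids_joinP a b n hab _ _).mpr ⟨hp.1.2, hp.2.2⟩
    have hfl := leftFact' (joinP a b n p.1 p.2) hn hav haOf
    have hfr := rightFact' (joinP a b n p.1 p.2) hn hav haOf
    rw [splitLT_eq _ a (by omega) hfl, splitRT_eq _ a b hab hfr]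
    ext : 1
    · exact splitL_joinP a b n hab p.1 p.2 (by omega) hfl
    · exact splitR_joinP a b n hab p.1 p.2 hfr
  · -- summand equality
    intro π hπ
    dsimp only
    rw [Finset.mem_filter] at hπ
    obtain ⟨hπ1, haOf⟩ := hπ
    rw [Aset, Finset.mem_filter] at hπ1
    have hav := hπ1.2
    have hfl := leftFact' π hn hav haOf
    have hfr := rightFact' π hn hav haOf
    have hmax := apply_aOf' π hn haOf (by omega)
    rw [splitLT_eq π a (by omega) hfl, splitRT_eq π a b hab hfr,
      join_split π a b hab hmax hfl hfr]

lemma perm0_eq_one (π : Equiv.Perm (Fin 0)) : π = 1 := Equiv.ext fun x => x.elim0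

lemma perm1_eq_one (π : Equiv.Perm (Fin 1)) : π = 1 := Equiv.ext fun x => Subsingleton.elim _ _

lemma avoids_of_le_two {n : ℕ} (hn : n ≤ 2) (π : Equiv.Perm (Fin n)) : avoids π ![2,3,1] := by
  rintro ⟨f, -⟩
  have h01 : f 0 < f 1 := f.strictMono (by decide)
  have h12 : f 1 < f 2 := f.strictMono (by decide)
  rw [Fin.lt_def] at h01 h12
  have := (f 2).isLt
  have := (f 0).isLt
  omega

lemma Aset_zero : Aset 0 = {1} := by
  ext π
  rw [Aset, Finset.mem_filter, Finset.mem_singleton]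
  exact ⟨fun _ => perm0_eq_one π, fun _ => ⟨Finset.mem_univ _, avoids_of_le_two (by omega) π⟩⟩

lemma Aset_one : Aset 1 = {1} := by
  ext π
  rw [Aset, Finset.mem_filter, Finset.mem_singleton]
  exact ⟨fun _ => perm1_eq_one π, fun _ => ⟨Finset.mem_univ _, avoids_of_le_two (by omega) π⟩⟩

lemma desStat_small {n : ℕ} (hn : n ≤ 1) (π : Equiv.Perm (Fin n)) : desStat π = 0 := by
  rw [desStat, show n - 1 = 0 from by omega, show Finset.Icc 1 0 = ∅ from rfl,
    Finset.filter_empty, Finset.card_empty]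

lemma v13_2_small {n : ℕ} (hn : n ≤ 1) (π : Equiv.Perm (Fin n)) : v13_2 π = 0 := by
  rw [v13_2, Finset.card_eq_zero, Finset.filter_eq_empty_iff]
  rintro ⟨i, j⟩ hij
  rw [Finset.mem_product, Finset.mem_Icc, Finset.mem_Icc] at hij
  rintro ⟨h1, -, -⟩
  omega

lemma noDD_small {n : ℕ} (hn : n ≤ 1) (π : Equiv.Perm (Fin n)) : noDD (n + 1) π := by
  intro i h1 h2 ⟨c1, c2⟩
  have hi : i = 1 ∧ n = 1 := by omega
  have hc : pvalB (n + 1) π (1 + 1) = n + 1 := pvalB_out π (by omega)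
  rw [hi.1, hc, pvalB_eq_pval π le_rfl (by omega)] at c2
  have := pval_le π 1
  omega

/-- with no double descents (boundary n+1), descents are non-adjacent and ≥ 2 -/
lemma des_le_of_noDD {n : ℕ} (π : Equiv.Perm (Fin n)) (hnd : noDD (n + 1) π) :
    2 * desStat π ≤ n - 1 := by
  rcases le_or_gt n 1 with hn | hn
  · rw [desStat_small hn π]; omega
  set D := (Finset.Icc 1 (n - 1)).filter (fun i => pval π (i + 1) < pval π i) with hD
  have hmem : ∀ i ∈ D, 1 ≤ i ∧ i ≤ n - 1 ∧ pval π (i + 1) < pval π i := by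
    intro i hi
    rw [hD, Finset.mem_filter, Finset.mem_Icc] at hi
    exact ⟨hi.1.1, hi.1.2, hi.2⟩
  have claim1 : ∀ i ∈ D, 2 ≤ i := by
    intro i hi
    obtain ⟨h1, h2, h3⟩ := hmem i hi
    by_contra hcon
    have hi1 : i = 1 := by omega
    refine hnd 1 (by omega) (by omega) ⟨?_, ?_⟩
    · rw [show (1:ℕ) - 1 = 0 from rfl, pvalB_out π (i := 0) (by omega),
        pvalB_eq_pval π (i := 1) (by omega) (by omega)]
      have := pval_le π 1; omega
    · show pvalB (n + 1) π 2 < pvalB (n + 1) π 1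
      rw [pvalB_eq_pval π (i := 2) (by omega) (by omega),
        pvalB_eq_pval π (i := 1) (by omega) (by omega)]
      rw [hi1] at h3; exact h3
  have claim2 : ∀ i ∈ D, i + 1 ∉ D := by
    intro i hi hcon
    obtain ⟨h1, h2, h3⟩ := hmem i hi
    obtain ⟨g1, g2, g3⟩ := hmem (i+1) hcon
    refine hnd (i+1) (by omega) (by omega) ⟨?_, ?_⟩
    · rw [show i + 1 - 1 = i from by omega, pvalB_eq_pval π (i := i + 1) (by omega) (by omega),
        pvalB_eq_pval π (i := i) (by omega) (by omega)]
      exact h3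
    · rw [pvalB_eq_pval π (i := i + 1 + 1) (by omega) (by omega),
        pvalB_eq_pval π (i := i + 1) (by omega) (by omega)]
      exact g3
  have hsub : D ∪ D.image (· + 1) ⊆ Finset.Icc 2 n := by
    intro x hx
    rw [Finset.mem_union] at hx
    rw [Finset.mem_Icc]
    rcases hx with hx | hx
    · have := claim1 x hx; have := (hmem x hx).2.1; omega
    · rw [Finset.mem_image] at hx
      obtain ⟨y, hy, hxy⟩ := hx
      have := claim1 y hy; have := (hmem y hy).2.1; omega
  have hdisj : Disjoint D (D.image (· + 1)) := by
    rw [Finset.disjoint_left]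
    intro x hx hx2
    rw [Finset.mem_image] at hx2
    obtain ⟨y, hy, hxy⟩ := hx2
    exact claim2 y hy (hxy ▸ hx)
  have hcard1 : (D ∪ D.image (· + 1)).card = D.card + D.card := by
    rw [Finset.card_union_of_disjoint hdisj, Finset.card_image_of_injective _
      (fun x y hxy => by omega)]
  have hcard2 : (D ∪ D.image (· + 1)).card ≤ (Finset.Icc 2 n).card := Finset.card_le_card hsub
  rw [Nat.card_Icc] at hcard2
  have : desStat π = D.card := rfl
  omega


noncomputable def Bp (n : ℕ) : MvPolynomial (Fin 2) ℤ :=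
  ∑ π ∈ Aset n, tP ^ desStat π * qP ^ v13_2 π

noncomputable def Wp (n : ℕ) : MvPolynomial (Fin 2) ℤ :=
  ∑ π ∈ (Aset n).filter (fun π => noDD (n + 1) π),
    tP ^ desStat π * (1 + tP) ^ (n - 1 - 2 * desStat π) * qP ^ v13_2 π

lemma Wp_eq_sum (m : ℕ) : Wp m = ∑ π ∈ Aset m,
    (if noDD (m + 1) π then
      tP ^ desStat π * (1 + tP) ^ (m - 1 - 2 * desStat π) * qP ^ v13_2 π else 0) :=
  Finset.sum_filter _ _

lemma Bp_one : Bp 1 = 1 := by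
  rw [Bp, Aset_one, Finset.sum_singleton, desStat_small le_rfl, v13_2_small le_rfl,
    pow_zero, pow_zero, mul_one]

lemma Wp_one : Wp 1 = 1 := by
  rw [Wp, Finset.filter_true_of_mem (fun π _ => noDD_small le_rfl π), Aset_one,
    Finset.sum_singleton, desStat_small le_rfl, v13_2_small le_rfl]
  norm_num

lemma pair_sum_B (a b n : ℕ) (hab : a + b + 1 = n) (ha : 1 ≤ a) (hb : 1 ≤ b) :
    ∑ p ∈ (Aset a) ×ˢ (Aset b),
      tP ^ desStat (joinP a b n p.1 p.2) * qP ^ v13_2 (joinP a b n p.1 p.2)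
    = tP * (qP ^ b * (Bp a * Bp b)) := by
  rw [Finset.sum_product]
  have key : ∀ σ ρ, tP ^ desStat (joinP a b n σ ρ) * qP ^ v13_2 (joinP a b n σ ρ)
      = (tP * qP ^ b) * ((tP ^ desStat σ * qP ^ v13_2 σ) * (tP ^ desStat ρ * qP ^ v13_2 ρ)) := by
    intro σ ρ
    rw [desStat_joinP a b n hab, v13_2_joinP a b n hab, if_neg (by omega : ¬ b = 0),
      if_neg (by omega : ¬ a = 0), pow_add, pow_add, pow_add, pow_add, pow_one]
    ring
  rw [Finset.sum_congr rfl fun σ _ => Finset.sum_congr rfl fun ρ _ => key σ ρ]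
  simp only [← Finset.mul_sum]
  rw [← Finset.sum_mul]
  rw [Bp, Bp]
  ring

lemma pair_sum_B_right (a n : ℕ) (hab : a + 0 + 1 = n) (ha : 1 ≤ a) :
    ∑ p ∈ (Aset a) ×ˢ (Aset 0),
      tP ^ desStat (joinP a 0 n p.1 p.2) * qP ^ v13_2 (joinP a 0 n p.1 p.2)
    = Bp a := by
  rw [Finset.sum_product, Bp]
  refine Finset.sum_congr rfl fun σ _ => ?_
  rw [Aset_zero, Finset.sum_singleton]
  rw [desStat_joinP a 0 n hab, v13_2_joinP a 0 n hab, if_pos rfl, if_neg (by omega : ¬ a = 0),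
    desStat_small (by omega) 1, v13_2_small (by omega) 1]
  norm_num

lemma pair_sum_B_left (b n : ℕ) (hab : 0 + b + 1 = n) (hb : 1 ≤ b) :
    ∑ p ∈ (Aset 0) ×ˢ (Aset b),
      tP ^ desStat (joinP 0 b n p.1 p.2) * qP ^ v13_2 (joinP 0 b n p.1 p.2)
    = tP * Bp b := by
  rw [Finset.sum_product, Aset_zero, Finset.sum_singleton, Bp, Finset.mul_sum]
  refine Finset.sum_congr rfl fun ρ _ => ?_
  rw [desStat_joinP 0 b n hab, v13_2_joinP 0 b n hab, if_neg (by omega : ¬ b = 0), if_pos rfl,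
    desStat_small (by omega) 1, v13_2_small (by omega) 1]
  rw [pow_add, pow_add]
  ring

lemma range_split (n : ℕ) (hn : 2 ≤ n) :
    Finset.range n = insert 0 (insert (n - 1) (Finset.Icc 1 (n - 2))) := by
  ext x
  simp only [Finset.mem_range, Finset.mem_insert, Finset.mem_Icc]
  omega

lemma Bp_rec (n : ℕ) (hn : 2 ≤ n) :
    Bp n = (1 + tP) * Bp (n - 1)
      + tP * ∑ a ∈ Finset.Icc 1 (n - 2), qP ^ (n - 1 - a) * (Bp a * Bp (n - 1 - a)) := by
  have h1 := master (M := MvPolynomial (Fin 2) ℤ) n (by omega)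
    (fun π => tP ^ desStat π * qP ^ v13_2 π)
  rw [Bp, h1, range_split n hn,
    Finset.sum_insert (by simp only [Finset.mem_insert, Finset.mem_Icc]; omega),
    Finset.sum_insert (by simp only [Finset.mem_Icc]; omega)]
  rw [show n - 1 - 0 = n - 1 from by omega]
  rw [pair_sum_B_left (n - 1) n (by omega) (by omega)]
  rw [show n - 1 - (n - 1) = 0 from by omega]
  rw [pair_sum_B_right (n - 1) n (by omega) (by omega)]
  have hmid : ∑ a ∈ Finset.Icc 1 (n - 2), ∑ p ∈ (Aset a) ×ˢ (Aset (n - 1 - a)),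
        tP ^ desStat (joinP a (n - 1 - a) n p.1 p.2) * qP ^ v13_2 (joinP a (n - 1 - a) n p.1 p.2)
      = ∑ a ∈ Finset.Icc 1 (n - 2), tP * (qP ^ (n - 1 - a) * (Bp a * Bp (n - 1 - a))) :=
    Finset.sum_congr rfl fun a haa => by
      rw [Finset.mem_Icc] at haa
      exact pair_sum_B a (n - 1 - a) n (by omega) (by omega) (by omega)
  rw [hmid, ← Finset.mul_sum]
  ring

lemma pair_sum_W (a b n : ℕ) (hab : a + b + 1 = n) (ha : 1 ≤ a) (hb : 1 ≤ b) :
    ∑ p ∈ (Aset a) ×ˢ (Aset b),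
      (if noDD (n + 1) (joinP a b n p.1 p.2) then
        tP ^ desStat (joinP a b n p.1 p.2)
          * (1 + tP) ^ (n - 1 - 2 * desStat (joinP a b n p.1 p.2))
          * qP ^ v13_2 (joinP a b n p.1 p.2) else 0)
    = tP * (qP ^ b * (Wp a * Wp b)) := by
  rw [Finset.sum_product]
  have key : ∀ σ ρ, (if noDD (n + 1) (joinP a b n σ ρ) then
        tP ^ desStat (joinP a b n σ ρ)
          * (1 + tP) ^ (n - 1 - 2 * desStat (joinP a b n σ ρ))
          * qP ^ v13_2 (joinP a b n σ ρ) else 0)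
      = (tP * qP ^ b) *
          ((if noDD (a + 1) σ then
            tP ^ desStat σ * (1 + tP) ^ (a - 1 - 2 * desStat σ) * qP ^ v13_2 σ else 0) *
          (if noDD (b + 1) ρ then
            tP ^ desStat ρ * (1 + tP) ^ (b - 1 - 2 * desStat ρ) * qP ^ v13_2 ρ else 0)) := by
    intro σ ρ
    by_cases hσ : noDD (a + 1) σ
    · by_cases hρ : noDD (b + 1) ρ
      · rw [if_pos ((noDD_joinP a b n hab σ ρ).mpr ⟨fun hh => absurd hh (by omega), hσ, hρ⟩),
          if_pos hσ, if_pos hρ, desStat_joinP a b n hab, v13_2_joinP a b n hab,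
          if_neg (by omega : ¬ b = 0), if_neg (by omega : ¬ a = 0)]
        have e1 : n - 1 - 2 * (desStat σ + desStat ρ + 1)
            = (a - 1 - 2 * desStat σ) + (b - 1 - 2 * desStat ρ) := by
          have := des_le_of_noDD σ hσ; have := des_le_of_noDD ρ hρ; omega
        rw [e1, pow_add, pow_add, pow_add, pow_add, pow_one]
        ring
      · rw [if_neg (fun hc => hρ ((noDD_joinP a b n hab σ ρ).mp hc).2.2), if_neg hρ]
        ring
    · rw [if_neg (fun hc => hσ ((noDD_joinP a b n hab σ ρ).mp hc).2.1), if_neg hσ]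
      ring
  rw [Finset.sum_congr rfl fun σ _ => Finset.sum_congr rfl fun ρ _ => key σ ρ]
  simp only [← Finset.mul_sum]
  rw [← Finset.sum_mul]
  rw [Wp_eq_sum, Wp_eq_sum]
  ring

lemma pair_sum_W_right (a n : ℕ) (hab : a + 0 + 1 = n) (ha : 1 ≤ a) :
    ∑ p ∈ (Aset a) ×ˢ (Aset 0),
      (if noDD (n + 1) (joinP a 0 n p.1 p.2) then
        tP ^ desStat (joinP a 0 n p.1 p.2)
          * (1 + tP) ^ (n - 1 - 2 * desStat (joinP a 0 n p.1 p.2))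
          * qP ^ v13_2 (joinP a 0 n p.1 p.2) else 0)
    = (1 + tP) * Wp a := by
  rw [Finset.sum_product, Wp_eq_sum, Finset.mul_sum]
  refine Finset.sum_congr rfl fun σ _ => ?_
  rw [Aset_zero, Finset.sum_singleton]
  by_cases hσ : noDD (a + 1) σ
  · rw [if_pos ((noDD_joinP a 0 n hab σ 1).mpr
      ⟨fun _ => rfl, hσ, noDD_small (by omega) 1⟩), if_pos hσ,
      desStat_joinP a 0 n hab, v13_2_joinP a 0 n hab, if_pos rfl,
      if_neg (by omega : ¬ a = 0), desStat_small (by omega) 1, v13_2_small (by omega) 1]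
    simp only [Nat.add_zero]
    have e1 : n - 1 - 2 * desStat σ = (a - 1 - 2 * desStat σ) + 1 := by
      have := des_le_of_noDD σ hσ; omega
    rw [e1, pow_add, pow_one]
    ring
  · rw [if_neg (fun hc => hσ ((noDD_joinP a 0 n hab σ 1).mp hc).2.1), if_neg hσ]
    ring

lemma pair_sum_W_left (b n : ℕ) (hab : 0 + b + 1 = n) (hb : 1 ≤ b) :
    ∑ p ∈ (Aset 0) ×ˢ (Aset b),
      (if noDD (n + 1) (joinP 0 b n p.1 p.2) then
        tP ^ desStat (joinP 0 b n p.1 p.2)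
          * (1 + tP) ^ (n - 1 - 2 * desStat (joinP 0 b n p.1 p.2))
          * qP ^ v13_2 (joinP 0 b n p.1 p.2) else 0)
    = 0 := by
  refine Finset.sum_eq_zero fun p _ => ?_
  rw [if_neg]
  intro hc
  have := ((noDD_joinP 0 b n hab p.1 p.2).mp hc).1 rfl
  omega

lemma Wp_rec (n : ℕ) (hn : 2 ≤ n) :
    Wp n = (1 + tP) * Wp (n - 1)
      + tP * ∑ a ∈ Finset.Icc 1 (n - 2), qP ^ (n - 1 - a) * (Wp a * Wp (n - 1 - a)) := by
  have h1 := master (M := MvPolynomial (Fin 2) ℤ) n (by omega)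
    (fun π => if noDD (n + 1) π then
      tP ^ desStat π * (1 + tP) ^ (n - 1 - 2 * desStat π) * qP ^ v13_2 π else 0)
  rw [Wp_eq_sum, h1, range_split n hn,
    Finset.sum_insert (by simp only [Finset.mem_insert, Finset.mem_Icc]; omega),
    Finset.sum_insert (by simp only [Finset.mem_Icc]; omega)]
  rw [show n - 1 - 0 = n - 1 from by omega]
  rw [pair_sum_W_left (n - 1) n (by omega) (by omega)]
  rw [show n - 1 - (n - 1) = 0 from by omega]
  rw [pair_sum_W_right (n - 1) n (by omega) (by omega)]
  have hmid : ∑ a ∈ Finset.Icc 1 (n - 2), ∑ p ∈ (Aset a) ×ˢ (Aset (n - 1 - a)),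
        (if noDD (n + 1) (joinP a (n - 1 - a) n p.1 p.2) then
          tP ^ desStat (joinP a (n - 1 - a) n p.1 p.2)
            * (1 + tP) ^ (n - 1 - 2 * desStat (joinP a (n - 1 - a) n p.1 p.2))
            * qP ^ v13_2 (joinP a (n - 1 - a) n p.1 p.2) else 0)
      = ∑ a ∈ Finset.Icc 1 (n - 2), tP * (qP ^ (n - 1 - a) * (Wp a * Wp (n - 1 - a))) :=
    Finset.sum_congr rfl fun a haa => by
      rw [Finset.mem_Icc] at haa
      exact pair_sum_W a (n - 1 - a) n (by omega) (by omega) (by omega)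
  rw [hmid, ← Finset.mul_sum]
  ring

lemma Bp_eq_Wp (n : ℕ) (hn : 1 ≤ n) : Bp n = Wp n := by
  induction n using Nat.strong_induction_on with
  | _ n IH =>
    rcases le_or_gt n 1 with h1 | h1
    · have : n = 1 := by omega
      rw [this, Bp_one, Wp_one]
    · rw [Bp_rec n (by omega), Wp_rec n (by omega), IH (n - 1) (by omega) (by omega)]
      refine congrArg (_ + ·) (congrArg (tP * ·) ?_)
      refine Finset.sum_congr rfl fun a haa => ?_
      rw [Finset.mem_Icc] at haa
      rw [IH a (by omega) (by omega), IH (n - 1 - a) (by omega) (by omega)]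

lemma Wp_eq_gamma (n : ℕ) :
    Wp n = ∑ k ∈ Finset.range ((n - 1) / 2 + 1),
      (∑ π ∈ Finset.univ.filter (fun π : Equiv.Perm (Fin n) =>
          avoids π ![2,3,1] ∧ desStat π = k ∧ noDD (n + 1) π),
        qP ^ v13_2 π) * tP ^ k * (1 + tP) ^ (n - 1 - 2 * k) := by
  have hset : ∀ k : ℕ, (Finset.univ.filter (fun π : Equiv.Perm (Fin n) =>
      avoids π ![2,3,1] ∧ desStat π = k ∧ noDD (n + 1) π))
      = ((Aset n).filter (fun π => noDD (n + 1) π)).filter (fun π => desStat π = k) := by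
    intro k; ext π
    simp only [Aset, Finset.mem_filter, Finset.mem_univ, true_and]
    tauto
  have step1 : ∑ k ∈ Finset.range ((n - 1) / 2 + 1),
      (∑ π ∈ Finset.univ.filter (fun π : Equiv.Perm (Fin n) =>
          avoids π ![2,3,1] ∧ desStat π = k ∧ noDD (n + 1) π),
        qP ^ v13_2 π) * tP ^ k * (1 + tP) ^ (n - 1 - 2 * k)
      = ∑ k ∈ Finset.range ((n - 1) / 2 + 1),
          ∑ π ∈ ((Aset n).filter (fun π => noDD (n + 1) π)).filter (fun π => desStat π = k),
            tP ^ desStat π * (1 + tP) ^ (n - 1 - 2 * desStat π) * qP ^ v13_2 π := by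
    refine Finset.sum_congr rfl fun k _ => ?_
    rw [hset k, Finset.sum_mul, Finset.sum_mul]
    refine Finset.sum_congr rfl fun π hπ => ?_
    rw [Finset.mem_filter] at hπ
    rw [← hπ.2]
    ring
  have step2 : ∑ k ∈ Finset.range ((n - 1) / 2 + 1),
      ∑ π ∈ ((Aset n).filter (fun π => noDD (n + 1) π)).filter (fun π => desStat π = k),
        tP ^ desStat π * (1 + tP) ^ (n - 1 - 2 * desStat π) * qP ^ v13_2 π
      = ∑ π ∈ (Aset n).filter (fun π => noDD (n + 1) π),
        tP ^ desStat π * (1 + tP) ^ (n - 1 - 2 * desStat π) * qP ^ v13_2 π := by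
    refine Finset.sum_fiberwise_of_maps_to (fun π hπ => ?_) _
    rw [Finset.mem_filter] at hπ
    rw [Finset.mem_range]
    have := des_le_of_noDD π hπ.2
    omega
  rw [step1, step2, Wp]


/-- γ-expansion of the (des, 13-2) polynomial over 231-avoiding permutations. -/
theorem stmt1 (n : ℕ) (hn : 1 ≤ n) :
    (∑ π ∈ Finset.univ.filter (fun π : Equiv.Perm (Fin n) => avoids π ![2,3,1]),
        tP ^ desStat π * qP ^ v13_2 π)
      = ∑ k ∈ Finset.range ((n - 1) / 2 + 1),
          (∑ π ∈ Finset.univ.filter (fun π : Equiv.Perm (Fin n) =>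
              avoids π ![2,3,1] ∧ desStat π = k ∧ noDD (n + 1) π),
            qP ^ v13_2 π) * tP ^ k * (1 + tP) ^ (n - 1 - 2 * k) := by
  have h1 : (∑ π ∈ Finset.univ.filter (fun π : Equiv.Perm (Fin n) => avoids π ![2,3,1]),
      tP ^ desStat π * qP ^ v13_2 π) = Bp n := rfl
  rw [h1, Bp_eq_Wp n hn, Wp_eq_gamma n]
end

section
/- If n is odd, then Σ_{π∈D_n(321)} (−1)^{exc π} q^{inv π} = 0 in ℤ[q]. If n = 2m is even, then Σ_{π∈D_{2m}(321)} (−1)^{exc π} q^{inv π} = (−1)^m · Σ_{π∈NDE_{2m,m}(321)} q^{inv π} in ℤ[q]. -/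
open scoped Classical
open Finset

namespace Stmt5

variable {n : ℕ}

lemma pval_eq {π : Equiv.Perm (Fin n)} {i : ℕ} (h1 : 1 ≤ i) (h2 : i ≤ n) :
    pval π i = (π ⟨i - 1, by omega⟩).val + 1 := by
  simp [pval, pvalB, h1, h2]

lemma pval_fin (π : Equiv.Perm (Fin n)) (j : Fin n) :
    pval π (j.val + 1) = (π j).val + 1 := by
  rw [pval_eq (by omega) (by omega)]
  congr 1

lemma excStat_eq (π : Equiv.Perm (Fin n)) :
    excStat π = (Finset.univ.filter fun j : Fin n => (j : ℕ) < (π j : ℕ)).card := by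
  unfold excStat
  apply Finset.card_bij (fun (i : ℕ) (hi : i ∈ (Finset.Icc 1 n).filter fun i => i < pval π i) =>
    (⟨i - 1, by simp [Finset.mem_filter, Finset.mem_Icc] at hi; omega⟩ : Fin n))
  · intro a ha
    simp only [Finset.mem_filter, Finset.mem_Icc] at ha ⊢
    obtain ⟨⟨h1, h2⟩, h3⟩ := ha
    rw [pval_eq h1 h2] at h3
    constructor
    · exact Finset.mem_univ _
    · simpa using Nat.lt_of_succ_lt_succ (by omega : (a - 1) + 1 < (π ⟨a-1, by omega⟩).val + 1)
  · intro a ha b hb hab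
    simp only [Finset.mem_filter, Finset.mem_Icc] at ha hb
    have := congrArg Fin.val hab
    simp at this
    omega
  · intro b _hb
    refine ⟨b.val + 1, ?_, ?_⟩
    · simp only [Finset.mem_filter, Finset.mem_Icc]
      simp only [Finset.mem_filter, Finset.mem_univ, true_and] at _hb
      rw [pval_fin]
      omega
    · apply Fin.ext
      simp

lemma invStat_eq (π : Equiv.Perm (Fin n)) :
    invStat π = (Finset.univ.filter fun p : Fin n × Fin n =>
      (p.1 : ℕ) < p.2 ∧ (π p.2 : ℕ) < π p.1).card := by
  unfold invStat
  apply Finset.card_bij (fun (p : ℕ × ℕ) (hp : p ∈ (((Finset.Icc 1 n) ×ˢ (Finset.Icc 1 n)).filter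
      fun p => p.1 < p.2 ∧ pval π p.2 < pval π p.1)) =>
    ((⟨p.1 - 1, by simp [Finset.mem_filter, Finset.mem_product, Finset.mem_Icc] at hp; omega⟩ : Fin n),
     (⟨p.2 - 1, by simp [Finset.mem_filter, Finset.mem_product, Finset.mem_Icc] at hp; omega⟩ : Fin n)))
  · intro a ha
    simp only [Finset.mem_filter, Finset.mem_product, Finset.mem_Icc] at ha
    obtain ⟨⟨⟨h1, h2⟩, h3, h4⟩, h5, h6⟩ := ha
    rw [pval_eq h1 h2, pval_eq h3 h4] at h6
    simp only [Finset.mem_filter, Finset.mem_univ, true_and]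
    constructor
    · show (a.1 - 1) < (a.2 - 1); omega
    · omega
  · intro a ha b hb hab
    simp only [Finset.mem_filter, Finset.mem_product, Finset.mem_Icc] at ha hb
    have h1 := congrArg (fun q : Fin n × Fin n => (q.1 : ℕ)) hab
    have h2 := congrArg (fun q : Fin n × Fin n => (q.2 : ℕ)) hab
    simp at h1 h2
    have : a.1 = b.1 := by omega
    have : a.2 = b.2 := by omega
    exact Prod.ext (by omega) (by omega)
  · intro b hb
    simp only [Finset.mem_filter, Finset.mem_univ, true_and] at hb
    refine ⟨(b.1.val + 1, b.2.val + 1), ?_, ?_⟩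
    · simp only [Finset.mem_filter, Finset.mem_product, Finset.mem_Icc]
      rw [pval_fin, pval_fin]
      refine ⟨⟨⟨by omega, by omega⟩, by omega, by omega⟩, ?_, ?_⟩
      · exact Nat.succ_lt_succ hb.1
      · exact Nat.succ_lt_succ hb.2
    · exact Prod.ext (Fin.ext (by simp)) (Fin.ext (by simp))

lemma nde_eq (π : Equiv.Perm (Fin n)) :
    (∀ i, 1 ≤ i → i ≤ n → ¬ (pval π.symm i < i ∧ i < pval π i)) ↔
      ∀ j : Fin n, ¬ ((π.symm j : ℕ) < j ∧ (j : ℕ) < π j) := by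
  constructor
  · intro h j ⟨hj1, hj2⟩
    refine h (j.val + 1) (by omega) (by omega) ⟨?_, ?_⟩
    · rw [pval_fin]; omega
    · rw [pval_fin]; omega
  · intro h i h1 h2 ⟨h3, h4⟩
    refine h ⟨i - 1, by omega⟩ ⟨?_, ?_⟩
    · rw [pval_eq h1 h2] at h3; simp only [Fin.val_mk]; omega
    · rw [pval_eq h1 h2] at h4; simp only [Fin.val_mk]; omega

lemma avoids321_iff (π : Equiv.Perm (Fin n)) :
    avoids π ![3,2,1] ↔
      ∀ i j k : Fin n, i < j → j < k → π j < π i → π k < π j → False := by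
  constructor
  · intro hav i j k hij hjk h1 h2
    apply hav
    have hsm : StrictMono (![i, j, k] : Fin 3 → Fin n) := by
      intro a b hab
      fin_cases a <;> fin_cases b <;>
        simp_all [Matrix.cons_val_zero, Matrix.cons_val_one] <;>
        first
          | exact hij
          | exact hjk
          | exact hij.trans hjk
          | exact absurd hab (by decide)
    refine ⟨OrderEmbedding.ofStrictMono _ hsm, ?_⟩
    intro a b
    fin_cases a <;> fin_cases b <;>
      simp [OrderEmbedding.ofStrictMono] <;>
      first
        | exact h1.le
        | exact h2.le
        | exact (h2.trans h1).le
        | exact h1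
        | exact h2
        | exact h2.trans h1
  · rintro h ⟨f, hf⟩
    have h01 : f 0 < f 1 := f.strictMono (by decide)
    have h12 : f 1 < f 2 := f.strictMono (by decide)
    have v10 : π (f 1) < π (f 0) := by
      have := (hf 1 0).mp (by norm_num)
      exact this
    have v21 : π (f 2) < π (f 1) := by
      have := (hf 2 1).mp (by decide)
      exact this
    exact h (f 0) (f 1) (f 2) h01 h12 v10 v21

/-- excedance positions -/
noncomputable def ESet (π : Equiv.Perm (Fin n)) : Finset (Fin n) :=
  Finset.univ.filter fun i => (i : ℕ) < π i

/-- excedance values -/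
noncomputable def ASet (π : Equiv.Perm (Fin n)) : Finset (Fin n) :=
  Finset.univ.filter fun i => (π.symm i : ℕ) < i

lemma mem_ESet {π : Equiv.Perm (Fin n)} {i : Fin n} : i ∈ ESet π ↔ (i : ℕ) < π i := by
  simp [ESet]

lemma mem_ASet {π : Equiv.Perm (Fin n)} {i : Fin n} : i ∈ ASet π ↔ (π.symm i : ℕ) < i := by
  simp [ASet]

lemma ASet_eq_image (π : Equiv.Perm (Fin n)) : ASet π = (ESet π).image π := by
  ext a
  simp only [mem_ASet, Finset.mem_image, mem_ESet]
  constructor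
  · intro h
    exact ⟨π.symm a, by simpa using h, by simp⟩
  · rintro ⟨e, he, rfl⟩
    simpa using he

lemma not_mem_ESet {π : Equiv.Perm (Fin n)} (hd : isDerangement π) {i : Fin n}
    (h : i ∉ ESet π) : (π i : ℕ) < i := by
  rw [mem_ESet] at h
  have := hd i
  have : (π i : ℕ) ≠ (i : ℕ) := fun hc => this (Fin.ext hc)
  omega

lemma not_mem_ASet {π : Equiv.Perm (Fin n)} (hd : isDerangement π) {a : Fin n}
    (h : a ∉ ASet π) : (a : ℕ) < π.symm a := by
  rw [mem_ASet] at h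
  have := hd (π.symm a)
  rw [Equiv.apply_symm_apply] at this
  have : (π.symm a : ℕ) ≠ (a : ℕ) := fun hc => this (Fin.ext hc.symm)
  omega

lemma exists_lt_after {π : Equiv.Perm (Fin n)} {i j : Fin n} (hij : i < j)
    (hj : (j : ℕ) < π j) (hv : π j < π i) : ∃ k, j < k ∧ π k < π j := by
  by_contra hc
  push_neg at hc
  have hsub : ∀ x ∈ insert i (Finset.Ici j), π x ∈ Finset.Ici (π j) := by
    intro x hx
    rcases Finset.mem_insert.mp hx with rfl | hx
    · exact Finset.mem_Ici.mpr hv.le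
    · rcases eq_or_lt_of_le (Finset.mem_Ici.mp hx) with rfl | h
      · exact Finset.mem_Ici.mpr le_rfl
      · exact Finset.mem_Ici.mpr (hc x h)
  have hcard := Finset.card_le_card_of_injOn π hsub (π.injective.injOn)
  rw [Finset.card_insert_of_notMem (by simp [Finset.mem_Ici, not_le, hij])] at hcard
  rw [Fin.card_Ici, Fin.card_Ici] at hcard
  have := j.is_lt
  have := (π j).is_lt
  omega

lemma exists_gt_before {π : Equiv.Perm (Fin n)} {i j : Fin n} (hij : i < j)
    (hi : (π i : ℕ) < i) (hv : π j < π i) : ∃ k, k < i ∧ π i < π k := by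
  by_contra hc
  push_neg at hc
  have hsub : ∀ x ∈ insert j (Finset.Iic i), π x ∈ Finset.Iic (π i) := by
    intro x hx
    rcases Finset.mem_insert.mp hx with rfl | hx
    · exact Finset.mem_Iic.mpr hv.le
    · rcases eq_or_lt_of_le (Finset.mem_Iic.mp hx) with rfl | h
      · exact Finset.mem_Iic.mpr le_rfl
      · exact Finset.mem_Iic.mpr (hc x h)
  have hcard := Finset.card_le_card_of_injOn π hsub (π.injective.injOn)
  rw [Finset.card_insert_of_notMem (by simp [Finset.mem_Iic, not_le, hij])] at hcard
  rw [Fin.card_Iic, Fin.card_Iic] at hcard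
  omega

/-- excedance subword increasing -/
lemma incE {π : Equiv.Perm (Fin n)}
    (hav : ∀ i j k : Fin n, i < j → j < k → π j < π i → π k < π j → False)
    {i j : Fin n} (hij : i < j) (hi : (i : ℕ) < π i) (hj : (j : ℕ) < π j) :
    π i < π j := by
  by_contra hc
  push_neg at hc
  have hne : π j ≠ π i := fun h => absurd (π.injective h) hij.ne'
  have hv : π j < π i := lt_of_le_of_ne hc hne
  obtain ⟨k, hjk, hk⟩ := exists_lt_after hij hj hv
  exact hav i j k hij hjk hv hk

/-- deficiency subword increasing -/
lemma incD {π : Equiv.Perm (Fin n)}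
    (hav : ∀ i j k : Fin n, i < j → j < k → π j < π i → π k < π j → False)
    {i j : Fin n} (hij : i < j) (hi : (π i : ℕ) < i) (hj : (π j : ℕ) < j) :
    π i < π j := by
  by_contra hc
  push_neg at hc
  have hne : π j ≠ π i := fun h => absurd (π.injective h) hij.ne'
  have hv : π j < π i := lt_of_le_of_ne hc hne
  obtain ⟨k, hki, hk⟩ := exists_gt_before hij hi hv
  exact hav k i j hki hij hk hv

/-- converse: class-monotone derangements avoid 321 -/
lemma avoids_of_inc {π : Equiv.Perm (Fin n)} (hd : isDerangement π)
    (hE : ∀ i j : Fin n, i < j → (i : ℕ) < π i → (j : ℕ) < π j → π i < π j)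
    (hD : ∀ i j : Fin n, i < j → (π i : ℕ) < i → (π j : ℕ) < j → π i < π j) :
    ∀ i j k : Fin n, i < j → j < k → π j < π i → π k < π j → False := by
  intro i j k hij hjk h1 h2
  have tri : ∀ x : Fin n, (x : ℕ) < π x ∨ (π x : ℕ) < x := by
    intro x
    have := hd x
    have : (π x : ℕ) ≠ (x : ℕ) := fun hc => this (Fin.ext hc)
    omega
  rcases tri i with hi | hi <;> rcases tri j with hj | hj
  · exact absurd (hE i j hij hi hj) (lt_asymm h1)
  · rcases tri k with hk | hk
    · exact absurd (hE i k (hij.trans hjk) hi hk) (lt_asymm (h2.trans h1))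
    · exact absurd (hD j k hjk hj hk) (lt_asymm h2)
  · rcases tri k with hk | hk
    · exact absurd (hE j k hjk hj hk) (lt_asymm h2)
    · exact absurd (hD i k (hij.trans hjk) hi hk) (lt_asymm (h2.trans h1))
  · exact absurd (hD i j hij hi hj) (lt_asymm h1)

lemma card_Iio_fin (i : Fin n) : (Finset.Iio i).card = (i : ℕ) := by
  simpa using Fintype.card_Iio i

lemma inv_add_eq {π : Equiv.Perm (Fin n)} (hd : isDerangement π)
    (hav : ∀ i j k : Fin n, i < j → j < k → π j < π i → π k < π j → False) :
    invStat π + ∑ e ∈ ESet π, (e : ℕ) = ∑ a ∈ ASet π, (a : ℕ) := by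
  have tri : ∀ x : Fin n, (x : ℕ) < π x ∨ (π x : ℕ) < x := by
    intro x
    have h1 := hd x
    have : (π x : ℕ) ≠ (x : ℕ) := fun hc => h1 (Fin.ext hc)
    omega
  -- fiberwise count
  have hfib : ∀ i : Fin n,
      (Finset.univ.filter fun j : Fin n => (i : ℕ) < j ∧ (π j : ℕ) < π i).card
        = if (i : ℕ) < π i then (π i : ℕ) - i else 0 := by
    intro i
    by_cases hi : (i : ℕ) < π i
    · rw [if_pos hi]
      set T : Finset (Fin n) := Finset.univ.filter fun j : Fin n => (π j : ℕ) < π i with hT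
      have hTcard : T.card = (π i : ℕ) := by
        have key : T.card = (Finset.Iio (π i)).card := by
          rw [hT]
          apply Finset.card_nbij (fun j => π j)
          · intro a ha
            simp only [Finset.coe_filter, Finset.mem_filter, Finset.mem_univ, true_and, Set.mem_setOf_eq] at ha
            exact Finset.mem_Iio.mpr (Fin.lt_def.mpr ha)
          · exact π.injective.injOn
          · intro b hb
            simp only [Finset.coe_Iio, Set.mem_Iio] at hb
            refine ⟨π.symm b, ?_, by simp⟩
            simp only [Finset.coe_filter, Finset.mem_univ, true_and, Set.mem_setOf_eq]
            rw [Equiv.apply_symm_apply]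
            exact Fin.lt_def.mp hb
        rw [key, card_Iio_fin]
      have hsplit := Finset.card_filter_add_card_filter_not
        (s := T) (p := fun j : Fin n => (i : ℕ) < j)
      have h1 : T.filter (fun j : Fin n => (i : ℕ) < j)
          = Finset.univ.filter fun j : Fin n => (i : ℕ) < j ∧ (π j : ℕ) < π i := by
        rw [hT, Finset.filter_filter]
        apply Finset.filter_congr
        intro x _
        tauto
      have h2 : T.filter (fun j : Fin n => ¬ (i : ℕ) < j) = Finset.Iio i := by
        ext j
        rw [hT]
        simp only [Finset.mem_filter, Finset.mem_univ, true_and, Finset.mem_Iio, not_lt]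
        constructor
        · rintro ⟨hPj, hji⟩
          rw [Fin.lt_def]
          rcases Nat.lt_or_ge (j : ℕ) i with h | h
          · exact h
          · exfalso
            have : (j : ℕ) = i := le_antisymm hji h
            have : j = i := Fin.ext this
            subst this
            omega
        · intro hji
          rw [Fin.lt_def] at hji
          constructor
          · rcases tri j with hj | hj
            · exact Fin.lt_def.mp (incE hav (Fin.lt_def.mpr hji) hj hi)
            · omega
          · omega
      rw [h1, h2, card_Iio_fin] at hsplit
      omega
    · rw [if_neg hi]
      rw [Finset.card_eq_zero, Finset.filter_eq_empty_iff]
      rintro j - ⟨hij, hv⟩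
      have hi' : (π i : ℕ) < i := by
        rcases tri i with h | h
        · exact absurd h hi
        · exact h
      rcases tri j with hj | hj
      · omega
      · have := incD hav (Fin.lt_def.mpr hij) hi' hj
        rw [Fin.lt_def] at this
        omega
  have hsum : invStat π = ∑ i : Fin n, if (i : ℕ) < π i then (π i : ℕ) - i else 0 := by
    rw [invStat_eq]
    rw [Finset.card_filter, Fintype.sum_prod_type]
    refine Finset.sum_congr rfl fun i _ => ?_
    rw [← hfib i, Finset.card_filter]
  rw [hsum]
  rw [← Finset.sum_filter]
  have hE : Finset.univ.filter (fun i : Fin n => (i : ℕ) < π i) = ESet π := rfl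
  rw [hE, ASet_eq_image, Finset.sum_image (fun a _ b _ h => π.injective h)]
  rw [← Finset.sum_add_distrib]
  refine Finset.sum_congr rfl fun i hi => ?_
  rw [mem_ESet] at hi
  omega

/-- validity of a pair (E, A) of position/value sets -/
def Valid (n : ℕ) (EA : Finset (Fin n) × Finset (Fin n)) : Prop :=
  EA.1.card = EA.2.card ∧
  (∀ t : Fin n, (EA.2 ∩ Finset.Iic t).card ≤ (EA.1 ∩ Finset.Iio t).card) ∧
  (∀ t : Fin n, (EA.1ᶜ ∩ Finset.Iic t).card ≤ (EA.2ᶜ ∩ Finset.Iio t).card)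

lemma card_ESet_eq (π : Equiv.Perm (Fin n)) : (ESet π).card = (ASet π).card := by
  rw [ASet_eq_image, Finset.card_image_of_injective _ π.injective]

lemma valid_of_derangement {π : Equiv.Perm (Fin n)} (hd : isDerangement π) :
    Valid n (ESet π, ASet π) := by
  refine ⟨card_ESet_eq π, fun t => ?_, fun t => ?_⟩
  · apply Finset.card_le_card_of_injOn (fun a => π.symm a)
    · intro a ha
      simp only [Finset.coe_inter, Set.mem_inter_iff, Finset.mem_coe, Finset.mem_inter, mem_ASet, Finset.mem_Iic] at ha
      obtain ⟨h1, h2⟩ := ha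
      simp only [Finset.coe_inter, Set.mem_inter_iff, Finset.mem_coe, Finset.mem_inter, mem_ESet, Finset.mem_Iio]
      constructor
      · simpa using h1
      · exact lt_of_lt_of_le (Fin.lt_def.mpr h1) h2
    · exact π.symm.injective.injOn
  · apply Finset.card_le_card_of_injOn (fun i => π i)
    · intro i hi
      simp only [Finset.coe_inter, Set.mem_inter_iff, Finset.mem_coe, Finset.mem_inter, Finset.mem_compl, mem_ESet, Finset.mem_Iic] at hi
      obtain ⟨h1, h2⟩ := hi
      have h1' : (π i : ℕ) < i := not_mem_ESet hd (by simpa [mem_ESet] using h1)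
      simp only [Finset.coe_inter, Set.mem_inter_iff, Finset.mem_coe, Finset.mem_inter, Finset.mem_compl, mem_ASet, Finset.mem_Iio]
      constructor
      · simp only [Equiv.symm_apply_apply]
        omega
      · exact lt_of_lt_of_le (Fin.lt_def.mpr h1') h2
    · exact π.injective.injOn

/-- key counting identity for strictly monotone maps between finsets -/
lemma card_Iic_inter {E A : Finset (Fin n)} {u : Fin n → Fin n}
    (hmono : ∀ a ∈ E, ∀ b ∈ E, a < b → u a < u b)
    (himg : E.image u = A) {x : Fin n} (hx : x ∈ E) :
    (A ∩ Finset.Iic (u x)).card = (E ∩ Finset.Iic x).card := by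
  symm
  apply Finset.card_nbij u
  · intro e he
    simp only [Finset.coe_inter, Set.mem_inter_iff, Finset.mem_coe, Finset.mem_inter, Finset.mem_Iic] at he ⊢
    obtain ⟨h1, h2⟩ := he
    refine ⟨himg ▸ Finset.mem_image_of_mem u h1, ?_⟩
    rcases eq_or_lt_of_le h2 with rfl | h
    · exact le_rfl
    · exact (hmono e h1 x hx h).le
  · intro a ha b hb hab
    simp only [Finset.coe_inter, Set.mem_inter_iff, Finset.mem_coe] at ha hb
    by_contra hne
    rcases lt_or_gt_of_ne hne with h | h
    · exact absurd hab (hmono a ha.1 b hb.1 h).ne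
    · exact absurd hab.symm (hmono b hb.1 a ha.1 h).ne
  · intro a ha
    simp only [Finset.coe_inter, Set.mem_inter_iff, Finset.mem_coe, Finset.mem_Iic] at ha
    obtain ⟨h1, h2⟩ := ha
    rw [← himg] at h1
    obtain ⟨e, he, rfl⟩ := Finset.mem_image.mp h1
    refine Set.mem_image_of_mem u ?_
    simp only [Finset.coe_inter, Set.mem_inter_iff, Finset.mem_coe, Finset.mem_Iic]
    refine ⟨he, ?_⟩
    by_contra hc
    push_neg at hc
    exact absurd h2 (not_le.mpr (hmono x hx e he hc))

/-- elements of a finset are determined by the cardinality of their lower cut -/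
lemma uniq_of_card_Iic {A : Finset (Fin n)} {a b : Fin n} (ha : a ∈ A) (hb : b ∈ A)
    (h : (A ∩ Finset.Iic a).card = (A ∩ Finset.Iic b).card) : a = b := by
  by_contra hne
  wlog hab : a < b generalizing a b
  · exact this hb ha h.symm (Ne.symm hne) (lt_of_le_of_ne (not_lt.mp hab) (Ne.symm hne))
  have hss : A ∩ Finset.Iic a ⊂ A ∩ Finset.Iic b := by
    refine ⟨Finset.inter_subset_inter_left (Finset.Iic_subset_Iic.mpr hab.le), ?_⟩
    intro hsub
    have : b ∈ A ∩ Finset.Iic a := hsub (by simp [hb])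
    simp only [Finset.mem_inter, Finset.mem_Iic] at this
    exact absurd this.2 (not_le.mpr hab)
  exact absurd h (Finset.card_lt_card hss).ne

/-- dominance forces excedance -/
lemma lt_of_dominance {E A : Finset (Fin n)} {u : Fin n → Fin n}
    (hmono : ∀ a ∈ E, ∀ b ∈ E, a < b → u a < u b)
    (himg : E.image u = A)
    (hdom : ∀ t : Fin n, (A ∩ Finset.Iic t).card ≤ (E ∩ Finset.Iio t).card)
    {x : Fin n} (hx : x ∈ E) : x < u x := by
  by_contra hc
  push_neg at hc
  have h1 := card_Iic_inter hmono himg hx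
  have h2 := hdom (u x)
  have h3 : E ∩ Finset.Iio (u x) ⊆ (E ∩ Finset.Iic x).erase x := by
    intro e he
    simp only [Finset.mem_inter, Finset.mem_Iio] at he
    have hlt : e < x := lt_of_lt_of_le he.2 hc
    exact Finset.mem_erase.mpr ⟨hlt.ne, Finset.mem_inter.mpr ⟨he.1, Finset.mem_Iic.mpr hlt.le⟩⟩
  have h4 := Finset.card_le_card h3
  have h5 : x ∈ E ∩ Finset.Iic x := Finset.mem_inter.mpr ⟨hx, Finset.mem_Iic.mpr le_rfl⟩
  have h6 := Finset.card_erase_of_mem h5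
  have h7 : 0 < (E ∩ Finset.Iic x).card := Finset.card_pos.mpr ⟨x, h5⟩
  omega

section Build

variable {E A : Finset (Fin n)}

/-- build the permutation from the pair (E, A): increasing on E with values A,
increasing on the complement with values Aᶜ -/
noncomputable def buildPerm (E A : Finset (Fin n)) : Equiv.Perm (Fin n) :=
  if h : E.card = A.card then
    Equiv.subtypeCongr
      (((E.orderIsoOfFin rfl).symm.toEquiv).trans (A.orderIsoOfFin h.symm).toEquiv)
      ((Equiv.subtypeEquivRight (fun x => (Finset.mem_compl (s := E) (a := x)).symm)).trans
        (((((Eᶜ : Finset (Fin n)).orderIsoOfFin rfl).symm.toEquiv).trans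
          (((Aᶜ : Finset (Fin n)).orderIsoOfFin
            (by simp [Finset.card_compl, h])).toEquiv)).trans
        (Equiv.subtypeEquivRight (fun x => (Finset.mem_compl (s := A) (a := x))))))
  else Equiv.refl _

lemma buildPerm_apply_mem (h : E.card = A.card) {x : Fin n} (hx : x ∈ E) :
    buildPerm E A x =
      ((A.orderIsoOfFin h.symm) ((E.orderIsoOfFin rfl).symm ⟨x, hx⟩) : Fin n) := by
  rw [buildPerm, dif_pos h]
  rw [Equiv.subtypeCongr]
  simp [Equiv.sumCompl_symm_apply_of_pos hx]

lemma buildPerm_apply_not_mem (h : E.card = A.card) {x : Fin n} (hx : x ∉ E) :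
    buildPerm E A x =
      (((Aᶜ : Finset (Fin n)).orderIsoOfFin (by simp [Finset.card_compl, h]))
        (((Eᶜ : Finset (Fin n)).orderIsoOfFin rfl).symm
          ⟨x, Finset.mem_compl.mpr hx⟩) : Fin n) := by
  rw [buildPerm, dif_pos h]
  rw [Equiv.subtypeCongr]
  simp [Equiv.sumCompl_symm_apply_of_neg hx, Equiv.subtypeEquivRight]
  rfl

lemma buildPerm_mem (h : E.card = A.card) {x : Fin n} (hx : x ∈ E) :
    buildPerm E A x ∈ A := by
  rw [buildPerm_apply_mem h hx]
  exact Finset.coe_mem _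

lemma buildPerm_not_mem (h : E.card = A.card) {x : Fin n} (hx : x ∉ E) :
    buildPerm E A x ∉ A := by
  rw [buildPerm_apply_not_mem h hx]
  have := Finset.coe_mem (((Aᶜ : Finset (Fin n)).orderIsoOfFin
    (by simp [Finset.card_compl, h]))
      (((Eᶜ : Finset (Fin n)).orderIsoOfFin rfl).symm ⟨x, Finset.mem_compl.mpr hx⟩))
  exact Finset.mem_compl.mp this

lemma buildPerm_mono_mem (h : E.card = A.card) {x y : Fin n} (hx : x ∈ E) (hy : y ∈ E)
    (hxy : x < y) : buildPerm E A x < buildPerm E A y := by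
  rw [buildPerm_apply_mem h hx, buildPerm_apply_mem h hy]
  have h1 : ((E.orderIsoOfFin rfl).symm ⟨x, hx⟩) < ((E.orderIsoOfFin rfl).symm ⟨y, hy⟩) := by
    rw [OrderIso.lt_iff_lt]
    exact Subtype.mk_lt_mk.mpr hxy
  have h2 := (A.orderIsoOfFin h.symm).lt_iff_lt.mpr h1
  exact h2

lemma buildPerm_mono_not_mem (h : E.card = A.card) {x y : Fin n} (hx : x ∉ E) (hy : y ∉ E)
    (hxy : x < y) : buildPerm E A x < buildPerm E A y := by
  rw [buildPerm_apply_not_mem h hx, buildPerm_apply_not_mem h hy]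
  have h1 : (((Eᶜ : Finset (Fin n)).orderIsoOfFin rfl).symm ⟨x, Finset.mem_compl.mpr hx⟩)
      < (((Eᶜ : Finset (Fin n)).orderIsoOfFin rfl).symm ⟨y, Finset.mem_compl.mpr hy⟩) := by
    rw [OrderIso.lt_iff_lt]
    exact Subtype.mk_lt_mk.mpr hxy
  exact ((Aᶜ : Finset (Fin n)).orderIsoOfFin (by simp [Finset.card_compl, h])).lt_iff_lt.mpr h1

lemma buildPerm_image (h : E.card = A.card) : E.image (buildPerm E A) = A := by
  apply Finset.eq_of_subset_of_card_le
  · intro a ha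
    obtain ⟨e, he, rfl⟩ := Finset.mem_image.mp ha
    exact buildPerm_mem h he
  · rw [Finset.card_image_of_injective _ (buildPerm E A).injective, h]

lemma buildPerm_image_compl (h : E.card = A.card) :
    (Eᶜ : Finset (Fin n)).image (buildPerm E A) = Aᶜ := by
  apply Finset.eq_of_subset_of_card_le
  · intro a ha
    obtain ⟨e, he, rfl⟩ := Finset.mem_image.mp ha
    exact Finset.mem_compl.mpr (buildPerm_not_mem h (Finset.mem_compl.mp he))
  · rw [Finset.card_image_of_injective _ (buildPerm E A).injective,
      Finset.card_compl, Finset.card_compl, h]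

end Build

section BuildValid

variable {E A : Finset (Fin n)}

lemma buildPerm_symm_not_mem (h : E.card = A.card) {a : Fin n} (ha : a ∉ A) :
    (buildPerm E A).symm a ∉ E := by
  intro hc
  exact ha (by simpa using buildPerm_mem h hc)

lemma buildPerm_lt_of_mem (hv : Valid n (E, A)) {x : Fin n} (hx : x ∈ E) :
    x < buildPerm E A x :=
  lt_of_dominance (fun a ha b hb hab => buildPerm_mono_mem hv.1 ha hb hab)
    (buildPerm_image hv.1) hv.2.1 hx

lemma buildPerm_gt_of_not_mem (hv : Valid n (E, A)) {x : Fin n} (hx : x ∉ E) :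
    buildPerm E A x < x := by
  have h := hv.1
  have key : ∀ a ∈ (Aᶜ : Finset (Fin n)), a < (buildPerm E A).symm a := by
    apply lt_of_dominance (u := (buildPerm E A).symm) (A := (Eᶜ : Finset (Fin n)))
    · intro a ha b hb hab
      have ha' := buildPerm_symm_not_mem h (Finset.mem_compl.mp ha)
      have hb' := buildPerm_symm_not_mem h (Finset.mem_compl.mp hb)
      rcases lt_trichotomy ((buildPerm E A).symm a) ((buildPerm E A).symm b) with hh | hh | hh
      · exact hh
      · exact absurd ((buildPerm E A).symm.injective hh) hab.ne
      · have := buildPerm_mono_not_mem h hb' ha' hh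
        simp only [Equiv.apply_symm_apply] at this
        exact absurd hab (lt_asymm this)
    · apply Finset.eq_of_subset_of_card_le
      · intro e he
        obtain ⟨a, ha, rfl⟩ := Finset.mem_image.mp he
        exact Finset.mem_compl.mpr (buildPerm_symm_not_mem h (Finset.mem_compl.mp ha))
      · rw [Finset.card_image_of_injective _ (buildPerm E A).symm.injective,
          Finset.card_compl, Finset.card_compl, h]
    · exact hv.2.2
  have hA : buildPerm E A x ∉ A := buildPerm_not_mem h hx
  have := key _ (Finset.mem_compl.mpr hA)
  simpa using this

lemma buildPerm_derangement (hv : Valid n (E, A)) : isDerangement (buildPerm E A) := by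
  intro x hc
  by_cases hx : x ∈ E
  · exact absurd hc (buildPerm_lt_of_mem hv hx).ne'
  · exact absurd hc (buildPerm_gt_of_not_mem hv hx).ne

lemma ESet_buildPerm (hv : Valid n (E, A)) : ESet (buildPerm E A) = E := by
  ext x
  rw [mem_ESet]
  constructor
  · intro hlt
    by_contra hx
    have := buildPerm_gt_of_not_mem hv hx
    rw [Fin.lt_def] at this
    omega
  · intro hx
    exact Fin.lt_def.mp (buildPerm_lt_of_mem hv hx)

lemma ASet_buildPerm (hv : Valid n (E, A)) : ASet (buildPerm E A) = A := by
  rw [ASet_eq_image, ESet_buildPerm hv, buildPerm_image hv.1]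

lemma buildPerm_avoids (hv : Valid n (E, A)) :
    ∀ i j k : Fin n, i < j → j < k →
      buildPerm E A j < buildPerm E A i → buildPerm E A k < buildPerm E A j → False := by
  apply avoids_of_inc (buildPerm_derangement hv)
  · intro i j hij hi hj
    have hi' : i ∈ E := by rw [← ESet_buildPerm hv, mem_ESet]; exact hi
    have hj' : j ∈ E := by rw [← ESet_buildPerm hv, mem_ESet]; exact hj
    exact buildPerm_mono_mem hv.1 hi' hj' hij
  · intro i j hij hi hj
    have hi' : i ∉ E := by
      rw [← ESet_buildPerm hv]
      rw [mem_ESet]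
      omega
    have hj' : j ∉ E := by
      rw [← ESet_buildPerm hv]
      rw [mem_ESet]
      omega
    exact buildPerm_mono_not_mem hv.1 hi' hj' hij

/-- uniqueness: reconstructing a 321-avoiding derangement from its excedance data -/
lemma buildPerm_eq {π : Equiv.Perm (Fin n)} (hd : isDerangement π)
    (hav : ∀ i j k : Fin n, i < j → j < k → π j < π i → π k < π j → False) :
    buildPerm (ESet π) (ASet π) = π := by
  have h := card_ESet_eq π
  have hv := valid_of_derangement hd
  set π₀ := buildPerm (ESet π) (ASet π) with hπ₀
  have hmonoπE : ∀ a ∈ ESet π, ∀ b ∈ ESet π, a < b → π a < π b := by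
    intro a ha b hb hab
    rw [mem_ESet] at ha hb
    exact incE hav hab ha hb
  have hmonoπD : ∀ a ∈ (ESet π)ᶜ, ∀ b ∈ (ESet π)ᶜ, a < b → π a < π b := by
    intro a ha b hb hab
    exact incD hav hab (not_mem_ESet hd (Finset.mem_compl.mp ha))
      (not_mem_ESet hd (Finset.mem_compl.mp hb))
  have himgπ : (ESet π).image π = ASet π := (ASet_eq_image π).symm
  have himgπD : ((ESet π)ᶜ : Finset (Fin n)).image π = (ASet π)ᶜ := by
    apply Finset.eq_of_subset_of_card_le
    · intro a ha
      obtain ⟨e, he, rfl⟩ := Finset.mem_image.mp ha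
      rw [Finset.mem_compl, mem_ASet, Equiv.symm_apply_apply]
      have := not_mem_ESet hd (Finset.mem_compl.mp he)
      omega
    · rw [Finset.card_image_of_injective _ π.injective,
        Finset.card_compl, Finset.card_compl, h]
  apply Equiv.ext
  intro x
  by_cases hx : x ∈ ESet π
  · have c1 := card_Iic_inter (fun a ha b hb hab => buildPerm_mono_mem h ha hb hab)
      (buildPerm_image h) hx
    have c2 := card_Iic_inter hmonoπE himgπ hx
    exact uniq_of_card_Iic (buildPerm_mem h hx)
      (himgπ ▸ Finset.mem_image_of_mem π hx) (c1.trans c2.symm)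
  · have hx' : x ∈ ((ESet π)ᶜ : Finset (Fin n)) := Finset.mem_compl.mpr hx
    have c1 := card_Iic_inter (E := ((ESet π)ᶜ : Finset (Fin n)))
      (fun a ha b hb hab =>
        buildPerm_mono_not_mem h (Finset.mem_compl.mp ha) (Finset.mem_compl.mp hb) hab)
      (buildPerm_image_compl h) hx'
    have c2 := card_Iic_inter hmonoπD himgπD hx'
    exact uniq_of_card_Iic
      (Finset.mem_compl.mpr (buildPerm_not_mem h hx))
      (himgπD ▸ Finset.mem_image_of_mem π hx') (c1.trans c2.symm)

end BuildValid

section Toggle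

/-- toggle membership of `t` in `S` -/
noncomputable def tog (t : Fin n) (S : Finset (Fin n)) : Finset (Fin n) :=
  if t ∈ S then S.erase t else insert t S

lemma mem_tog {t x : Fin n} {S : Finset (Fin n)} :
    x ∈ tog t S ↔ (x = t ∧ t ∉ S) ∨ (x ≠ t ∧ x ∈ S) := by
  unfold tog
  by_cases h : t ∈ S <;>
    simp only [h, if_pos, if_neg, if_true, if_false, Finset.mem_erase, Finset.mem_insert,
      not_false_iff, not_true] <;>
    constructor <;> intro hh <;> by_cases hxt : x = t <;> subst_eqs <;> tauto

lemma tog_tog (t : Fin n) (S : Finset (Fin n)) : tog t (tog t S) = S := by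
  ext x
  simp only [mem_tog]
  by_cases hx : x = t <;> by_cases ht : t ∈ S <;> simp [hx, ht] <;> tauto

lemma tog_ne (t : Fin n) (S : Finset (Fin n)) : tog t S ≠ S := by
  intro hc
  have h1 : (t ∈ tog t S) ↔ t ∉ S := by simp [mem_tog]
  rw [hc] at h1
  tauto

lemma tog_inter_of_not_mem {t : Fin n} {S X : Finset (Fin n)} (h : t ∉ X) :
    tog t S ∩ X = S ∩ X := by
  ext x
  simp only [Finset.mem_inter, mem_tog]
  constructor
  · rintro ⟨(⟨rfl, -⟩ | ⟨-, hx⟩), hX⟩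
    · exact absurd hX h
    · exact ⟨hx, hX⟩
  · rintro ⟨hS, hX⟩
    refine ⟨Or.inr ⟨?_, hS⟩, hX⟩
    rintro rfl
    exact h hX

lemma tog_card_inter_of_mem {t : Fin n} {S X : Finset (Fin n)} (hX : t ∈ X) (hS : t ∈ S) :
    (tog t S ∩ X).card + 1 = (S ∩ X).card := by
  have h1 : tog t S ∩ X = (S ∩ X).erase t := by
    ext x
    simp only [Finset.mem_inter, mem_tog, Finset.mem_erase]
    constructor
    · rintro ⟨(⟨rfl, ht⟩ | ⟨hne, hx⟩), hXx⟩
      · exact absurd hS ht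
      · exact ⟨hne, hx, hXx⟩
    · rintro ⟨hne, hx, hXx⟩
      exact ⟨Or.inr ⟨hne, hx⟩, hXx⟩
  rw [h1, Finset.card_erase_of_mem (Finset.mem_inter.mpr ⟨hS, hX⟩)]
  have : 0 < (S ∩ X).card := Finset.card_pos.mpr ⟨t, Finset.mem_inter.mpr ⟨hS, hX⟩⟩
  omega

lemma tog_card_inter_of_not_mem {t : Fin n} {S X : Finset (Fin n)} (hX : t ∈ X) (hS : t ∉ S) :
    (tog t S ∩ X).card = (S ∩ X).card + 1 := by
  have h1 : tog t S ∩ X = insert t (S ∩ X) := by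
    ext x
    simp only [Finset.mem_inter, mem_tog, Finset.mem_insert]
    constructor
    · rintro ⟨(⟨rfl, -⟩ | ⟨hne, hx⟩), hXx⟩
      · exact Or.inl rfl
      · exact Or.inr ⟨hx, hXx⟩
    · rintro (rfl | ⟨hx, hXx⟩)
      · exact ⟨Or.inl ⟨rfl, hS⟩, hX⟩
      · refine ⟨Or.inr ⟨?_, hx⟩, hXx⟩
        rintro rfl
        exact hS hx
  rw [h1, Finset.card_insert_of_notMem (fun hc => hS (Finset.mem_inter.mp hc).1)]

lemma tog_card_of_mem {t : Fin n} {S : Finset (Fin n)} (hS : t ∈ S) :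
    (tog t S).card + 1 = S.card := by
  have := tog_card_inter_of_mem (Finset.mem_univ t) hS (X := Finset.univ)
  simpa using this

lemma tog_card_of_not_mem {t : Fin n} {S : Finset (Fin n)} (hS : t ∉ S) :
    (tog t S).card = S.card + 1 := by
  have := tog_card_inter_of_not_mem (Finset.mem_univ t) hS (X := Finset.univ)
  simpa using this

lemma tog_compl (t : Fin n) (S : Finset (Fin n)) : (tog t S)ᶜ = tog t Sᶜ := by
  ext x
  simp only [Finset.mem_compl, mem_tog]
  by_cases hx : x = t <;> by_cases ht : t ∈ S <;> simp [hx, ht]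

lemma tog_sum_of_mem {t : Fin n} {S : Finset (Fin n)} (hS : t ∈ S) :
    (∑ x ∈ tog t S, (x : ℕ)) + (t : ℕ) = ∑ x ∈ S, (x : ℕ) := by
  rw [tog, if_pos hS]
  exact Finset.sum_erase_add S _ hS

lemma tog_sum_of_not_mem {t : Fin n} {S : Finset (Fin n)} (hS : t ∉ S) :
    (∑ x ∈ tog t S, (x : ℕ)) = (∑ x ∈ S, (x : ℕ)) + (t : ℕ) := by
  rw [tog, if_neg hS, Finset.sum_insert hS]
  ring

end Toggle

section Involution

lemma card_compl_inter (S X : Finset (Fin n)) :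
    ((Sᶜ : Finset (Fin n)) ∩ X).card + (S ∩ X).card = X.card := by
  have h1 : (Sᶜ : Finset (Fin n)) ∩ X = X \ S := by
    ext y
    simp only [Finset.mem_inter, Finset.mem_compl, Finset.mem_sdiff]
    tauto
  rw [h1, inter_comm]
  exact Finset.card_sdiff_add_card_inter X S

lemma card_Iic_eq_Iio (t : Fin n) : (Finset.Iic t).card = (Finset.Iio t).card + 1 := by
  rw [← Finset.Iio_insert, Finset.card_insert_of_notMem (by simp)]

lemma inter_Iic_of_not_mem {t : Fin n} {S : Finset (Fin n)} (h : t ∉ S) :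
    S ∩ Finset.Iic t = S ∩ Finset.Iio t := by
  ext y
  simp only [Finset.mem_inter, Finset.mem_Iic, Finset.mem_Iio]
  constructor
  · rintro ⟨h1, h2⟩
    refine ⟨h1, lt_of_le_of_ne h2 ?_⟩
    rintro rfl
    exact h h1
  · rintro ⟨h1, h2⟩
    exact ⟨h1, h2.le⟩

lemma card_inter_Iic_of_mem {t : Fin n} {S : Finset (Fin n)} (h : t ∈ S) :
    (S ∩ Finset.Iic t).card = (S ∩ Finset.Iio t).card + 1 := by
  have h1 : S ∩ Finset.Iic t = insert t (S ∩ Finset.Iio t) := by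
    ext y
    simp only [Finset.mem_inter, Finset.mem_Iic, Finset.mem_Iio, Finset.mem_insert]
    constructor
    · rintro ⟨h1, h2⟩
      rcases eq_or_lt_of_le h2 with h3 | h3
      · exact Or.inl h3
      · exact Or.inr ⟨h1, h3⟩
    · rintro (rfl | ⟨h1, h2⟩)
      · exact ⟨h, le_rfl⟩
      · exact ⟨h1, h2.le⟩
  rw [h1, Finset.card_insert_of_notMem (by simp)]

/-- positions where the pair is "both" or "neither" -/
noncomputable def badSet (EA : Finset (Fin n) × Finset (Fin n)) : Finset (Fin n) :=
  Finset.univ.filter fun x => (x ∈ EA.1 ∧ x ∈ EA.2) ∨ (x ∉ EA.1 ∧ x ∉ EA.2)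

lemma mem_badSet {EA : Finset (Fin n) × Finset (Fin n)} {x : Fin n} :
    x ∈ badSet EA ↔ ((x ∈ EA.1 ∧ x ∈ EA.2) ∨ (x ∉ EA.1 ∧ x ∉ EA.2)) := by
  rw [badSet, Finset.mem_filter]
  simp only [Finset.mem_univ, true_and]

lemma badSet_empty_iff {EA : Finset (Fin n) × Finset (Fin n)} :
    badSet EA = ∅ ↔ EA.2 = EA.1ᶜ := by
  constructor
  · intro h
    ext x
    have hx : x ∉ badSet EA := h ▸ Finset.notMem_empty x
    rw [mem_badSet] at hx
    rw [Finset.mem_compl]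
    tauto
  · intro h
    rw [Finset.eq_empty_iff_forall_notMem]
    intro x hx
    rw [mem_badSet] at hx
    rw [h] at hx
    rw [Finset.mem_compl] at hx
    tauto

/-- the toggle involution on pairs (at a point t) -/
noncomputable def tp (t : Fin n) (EA : Finset (Fin n) × Finset (Fin n)) :
    Finset (Fin n) × Finset (Fin n) :=
  (tog t EA.1, tog t EA.2)

lemma badSet_tp {EA : Finset (Fin n) × Finset (Fin n)} {t : Fin n} (ht : t ∈ badSet EA) :
    badSet (tp t EA) = badSet EA := by
  rw [mem_badSet] at ht
  ext x
  rw [mem_badSet, mem_badSet]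
  show ((x ∈ tog t EA.1 ∧ x ∈ tog t EA.2) ∨ (x ∉ tog t EA.1 ∧ x ∉ tog t EA.2)) ↔ _
  by_cases hx : x = t
  · subst hx
    simp only [mem_tog]
    tauto
  · simp only [mem_tog, hx, false_and, ne_eq, not_false_iff, true_and, false_or] <;> tauto

lemma tp_tp {EA : Finset (Fin n) × Finset (Fin n)} {t : Fin n} :
    tp t (tp t EA) = EA := by
  rw [tp, tp]
  exact Prod.ext (tog_tog t EA.1) (tog_tog t EA.2)

lemma tp_valid {EA : Finset (Fin n) × Finset (Fin n)} (hv : Valid n EA)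
    {t : Fin n} (ht : t ∈ badSet EA) : Valid n (tp t EA) := by
  obtain ⟨hc, hC1, hC2⟩ := hv
  rw [mem_badSet] at ht
  refine ⟨?_, ?_, ?_⟩
  · show (tog t EA.1).card = (tog t EA.2).card
    rcases ht with ⟨hE, hA⟩ | ⟨hE, hA⟩
    · have h1 := tog_card_of_mem hE
      have h2 := tog_card_of_mem hA
      omega
    · have h1 := tog_card_of_not_mem hE
      have h2 := tog_card_of_not_mem hA
      omega
  · intro u
    show (tog t EA.2 ∩ Finset.Iic u).card ≤ (tog t EA.1 ∩ Finset.Iio u).card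
    have horig := hC1 u
    rcases lt_trichotomy t u with hlt | rfl | hgt
    · have hIic : t ∈ Finset.Iic u := Finset.mem_Iic.mpr hlt.le
      have hIio : t ∈ Finset.Iio u := Finset.mem_Iio.mpr hlt
      rcases ht with ⟨hE, hA⟩ | ⟨hE, hA⟩
      · have h1 := tog_card_inter_of_mem hIic hA
        have h2 := tog_card_inter_of_mem hIio hE
        omega
      · have h1 := tog_card_inter_of_not_mem hIic hA
        have h2 := tog_card_inter_of_not_mem hIio hE
        omega
    · rw [tog_inter_of_not_mem (by simp : t ∉ Finset.Iio t)]
      rcases ht with ⟨hE, hA⟩ | ⟨hE, hA⟩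
      · have h1 := tog_card_inter_of_mem (Finset.mem_Iic.mpr le_rfl) hA
        omega
      · have h1 := tog_card_inter_of_not_mem (Finset.mem_Iic.mpr le_rfl) hA
        have h2 := hC2 t
        have e1 := card_compl_inter EA.1 (Finset.Iic t)
        have e2 := card_compl_inter EA.2 (Finset.Iio t)
        have e3 := card_Iic_eq_Iio t
        have e4 := inter_Iic_of_not_mem hE
        have e5 := inter_Iic_of_not_mem hA
        have e6 := hC1 t
        rw [e4] at e1
        rw [e5] at h1
        omega
    · rw [tog_inter_of_not_mem (by simp only [Finset.mem_Iic, not_le]; exact hgt),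
        tog_inter_of_not_mem
          (by simp only [Finset.mem_Iio, not_lt]; exact hgt.le)]
      exact horig
  · intro u
    show ((tog t EA.1)ᶜ ∩ Finset.Iic u).card ≤ ((tog t EA.2)ᶜ ∩ Finset.Iio u).card
    rw [tog_compl, tog_compl]
    have horig := hC2 u
    rcases lt_trichotomy t u with hlt | rfl | hgt
    · have hIic : t ∈ Finset.Iic u := Finset.mem_Iic.mpr hlt.le
      have hIio : t ∈ Finset.Iio u := Finset.mem_Iio.mpr hlt
      rcases ht with ⟨hE, hA⟩ | ⟨hE, hA⟩
      · have h1 := tog_card_inter_of_not_mem hIic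
          (by rw [Finset.mem_compl]; exact fun hcc => hcc hE)
        have h2 := tog_card_inter_of_not_mem hIio
          (by rw [Finset.mem_compl]; exact fun hcc => hcc hA)
        omega
      · have h1 := tog_card_inter_of_mem hIic (Finset.mem_compl.mpr hE)
        have h2 := tog_card_inter_of_mem hIio (Finset.mem_compl.mpr hA)
        omega
    · rw [tog_inter_of_not_mem (by simp : t ∉ Finset.Iio t)]
      rcases ht with ⟨hE, hA⟩ | ⟨hE, hA⟩
      · -- case B: E'ᶜ gains t: need C1 at t
        have h1 := tog_card_inter_of_not_mem (Finset.mem_Iic.mpr le_rfl)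
          (by rw [Finset.mem_compl]; exact fun hcc => hcc hE)
        have h2 := hC1 t
        have e1 := card_compl_inter EA.1 (Finset.Iic t)
        have e2 := card_compl_inter EA.2 (Finset.Iio t)
        have e3 := card_Iic_eq_Iio t
        have e4 := card_inter_Iic_of_mem hE
        have e5 := card_inter_Iic_of_mem hA
        omega
      · have h1 := tog_card_inter_of_mem (Finset.mem_Iic.mpr le_rfl)
          (Finset.mem_compl.mpr hE)
        omega
    · rw [tog_inter_of_not_mem (by simp only [Finset.mem_Iic, not_le]; exact hgt),
        tog_inter_of_not_mem
          (by simp only [Finset.mem_Iio, not_lt]; exact hgt.le)]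
      exact horig

/-- the inversion weight of a pair -/
noncomputable def pairW (EA : Finset (Fin n) × Finset (Fin n)) : ℕ :=
  (∑ x ∈ EA.2, (x : ℕ)) - (∑ x ∈ EA.1, (x : ℕ))

lemma tp_pairW {EA : Finset (Fin n) × Finset (Fin n)} {t : Fin n} (ht : t ∈ badSet EA) :
    pairW (tp t EA) = pairW EA := by
  rw [mem_badSet] at ht
  show (∑ x ∈ tog t EA.2, (x : ℕ)) - (∑ x ∈ tog t EA.1, (x : ℕ)) = _
  rw [pairW]
  rcases ht with ⟨hE, hA⟩ | ⟨hE, hA⟩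
  · have h1 := tog_sum_of_mem hE
    have h2 := tog_sum_of_mem hA
    omega
  · have h1 := tog_sum_of_not_mem hE
    have h2 := tog_sum_of_not_mem hA
    omega

lemma tp_sign {EA : Finset (Fin n) × Finset (Fin n)} {t : Fin n} (ht : t ∈ badSet EA) :
    ((-1 : Polynomial ℤ)) ^ (tp t EA).1.card = -(-1 : Polynomial ℤ) ^ EA.1.card := by
  rw [mem_badSet] at ht
  have : (tp t EA).1 = tog t EA.1 := rfl
  rw [this]
  rcases ht with ⟨hE, -⟩ | ⟨hE, -⟩
  · have h1 := tog_card_of_mem hE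
    rw [← h1, pow_succ]
    ring
  · have h1 := tog_card_of_not_mem hE
    rw [h1, pow_succ]
    ring

/-- pair-level sign-reversing involution: only the pairs with `A = Eᶜ` survive -/
lemma pair_sum_eq (n : ℕ) :
    ∑ EA ∈ Finset.univ.filter (fun EA : Finset (Fin n) × Finset (Fin n) => Valid n EA),
      (-1 : Polynomial ℤ) ^ EA.1.card * Polynomial.X ^ pairW EA
    = ∑ EA ∈ Finset.univ.filter
        (fun EA : Finset (Fin n) × Finset (Fin n) => Valid n EA ∧ EA.2 = EA.1ᶜ),
      (-1 : Polynomial ℤ) ^ EA.1.card * Polynomial.X ^ pairW EA := by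
  classical
  rw [← Finset.sum_filter_add_sum_filter_not
    (Finset.univ.filter (fun EA : Finset (Fin n) × Finset (Fin n) => Valid n EA))
    (fun EA => EA.2 = EA.1ᶜ)]
  rw [Finset.filter_filter]
  have hzero : ∑ EA ∈ (Finset.univ.filter
      (fun EA : Finset (Fin n) × Finset (Fin n) => Valid n EA)).filter
        (fun EA => ¬ EA.2 = EA.1ᶜ),
      (-1 : Polynomial ℤ) ^ EA.1.card * Polynomial.X ^ pairW EA = 0 := by
    have hne : ∀ EA ∈ (Finset.univ.filter
        (fun EA : Finset (Fin n) × Finset (Fin n) => Valid n EA)).filter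
          (fun EA => ¬ EA.2 = EA.1ᶜ), (badSet EA).Nonempty := by
      intro EA hEA
      simp only [Finset.mem_filter] at hEA
      rw [Finset.nonempty_iff_ne_empty]
      intro hc
      exact hEA.2 (badSet_empty_iff.mp hc)
    apply Finset.sum_involution
      (g := fun EA hEA => tp ((badSet EA).min' (hne EA hEA)) EA)
    · intro EA hEA
      have htmem := (badSet EA).min'_mem (hne EA hEA)
      rw [tp_sign htmem, tp_pairW htmem]
      ring
    · intro EA hEA _
      intro hc
      exact tog_ne ((badSet EA).min' (hne EA hEA)) EA.1 (congrArg Prod.fst hc)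
    · intro EA hEA
      have htmem := (badSet EA).min'_mem (hne EA hEA)
      rw [show ∀ h', (badSet (tp ((badSet EA).min' (hne EA hEA)) EA)).min' h'
          = (badSet EA).min' (hne EA hEA) from fun h' => by congr 1; exact badSet_tp htmem]
      exact tp_tp
    · intro EA hEA
      have htmem := (badSet EA).min'_mem (hne EA hEA)
      simp only [Finset.mem_filter] at hEA ⊢
      simp only [Finset.mem_univ, true_and] at hEA ⊢
      refine ⟨tp_valid hEA.1 htmem, ?_⟩
      intro hc
      have hb := badSet_tp htmem
      have : badSet EA = ∅ := hb ▸ badSet_empty_iff.mpr hc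
      exact hEA.2 (badSet_empty_iff.mp this)
  rw [hzero, add_zero]

end Involution

section Transfer

lemma excStat_ESet (π : Equiv.Perm (Fin n)) : excStat π = (ESet π).card := excStat_eq π

lemma invStat_pairW {π : Equiv.Perm (Fin n)} (hd : isDerangement π)
    (hav : ∀ i j k : Fin n, i < j → j < k → π j < π i → π k < π j → False) :
    invStat π = pairW (ESet π, ASet π) := by
  have h := inv_add_eq hd hav
  show invStat π = (∑ x ∈ ASet π, (x : ℕ)) - ∑ x ∈ ESet π, (x : ℕ)
  omega

lemma avoids_iff_fin (π : Equiv.Perm (Fin n)) :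
    avoids π ![3,2,1] ↔
      ∀ i j k : Fin n, i < j → j < k → π j < π i → π k < π j → False := by
  exact avoids321_iff π

lemma perm_sum_eq_pair_sum (n : ℕ) :
    ∑ π ∈ Finset.univ.filter
        (fun π : Equiv.Perm (Fin n) => isDerangement π ∧ avoids π ![3,2,1]),
      (-1 : Polynomial ℤ) ^ excStat π * Polynomial.X ^ invStat π
    = ∑ EA ∈ Finset.univ.filter (fun EA : Finset (Fin n) × Finset (Fin n) => Valid n EA),
      (-1 : Polynomial ℤ) ^ EA.1.card * Polynomial.X ^ pairW EA := by
  refine Finset.sum_bij' (fun π _ => (ESet π, ASet π))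
    (fun EA _ => buildPerm EA.1 EA.2) ?_ ?_ ?_ ?_ ?_
  · intro π hπ
    simp only [Finset.mem_filter, Finset.mem_univ, true_and] at hπ ⊢
    exact valid_of_derangement hπ.1
  · intro EA hEA
    simp only [Finset.mem_filter, Finset.mem_univ, true_and] at hEA ⊢
    refine ⟨buildPerm_derangement hEA, ?_⟩
    rw [avoids_iff_fin]
    exact buildPerm_avoids hEA
  · intro π hπ
    simp only [Finset.mem_filter, Finset.mem_univ, true_and] at hπ
    exact buildPerm_eq hπ.1 ((avoids_iff_fin π).mp hπ.2)
  · intro EA hEA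
    simp only [Finset.mem_filter, Finset.mem_univ, true_and] at hEA
    exact Prod.ext (ESet_buildPerm hEA) (ASet_buildPerm hEA)
  · intro π hπ
    simp only [Finset.mem_filter, Finset.mem_univ, true_and] at hπ
    rw [excStat_ESet, invStat_pairW hπ.1 ((avoids_iff_fin π).mp hπ.2)]

lemma nde_iff_inter {π : Equiv.Perm (Fin n)} :
    (∀ i, 1 ≤ i → i ≤ n → ¬ (pval π.symm i < i ∧ i < pval π i)) ↔
      ESet π ∩ ASet π = ∅ := by
  rw [nde_eq]
  constructor
  · intro h
    rw [Finset.eq_empty_iff_forall_notMem]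
    intro j hj
    rw [Finset.mem_inter, mem_ESet, mem_ASet] at hj
    exact h j ⟨hj.2, hj.1⟩
  · intro h j ⟨h1, h2⟩
    have : j ∈ ESet π ∩ ASet π := by
      rw [Finset.mem_inter, mem_ESet, mem_ASet]
      exact ⟨h2, h1⟩
    rw [h] at this
    exact Finset.notMem_empty j this

lemma compl_iff_card_inter {m : ℕ} {E A : Finset (Fin (2 * m))}
    (hcard : E.card = A.card) :
    A = Eᶜ ↔ (E.card = m ∧ E ∩ A = ∅) := by
  constructor
  · intro h
    subst h
    constructor
    · have h1 : (Eᶜ : Finset (Fin (2 * m))).card = Fintype.card (Fin (2 * m)) - E.card :=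
        Finset.card_compl E
      rw [Fintype.card_fin] at h1
      have h2 : E.card ≤ Fintype.card (Fin (2 * m)) := Finset.card_le_univ E
      rw [Fintype.card_fin] at h2
      omega
    · exact Finset.inter_compl E
  · rintro ⟨h1, h2⟩
    have hdisj : Disjoint E A := Finset.disjoint_iff_inter_eq_empty.mpr h2
    have hcup : (E ∪ A).card = 2 * m := by
      rw [Finset.card_union_of_disjoint hdisj]
      omega
    have huniv : E ∪ A = Finset.univ := by
      apply Finset.eq_univ_of_card
      rw [hcup, Fintype.card_fin]
    ext x
    rw [Finset.mem_compl]
    constructor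
    · intro hx hxE
      have : x ∈ E ∩ A := Finset.mem_inter.mpr ⟨hxE, hx⟩
      rw [h2] at this
      exact Finset.notMem_empty x this
    · intro hx
      have : x ∈ E ∪ A := huniv ▸ Finset.mem_univ x
      rcases Finset.mem_union.mp this with h | h
      · exact absurd h hx
      · exact h

lemma perm_sum_eq_pair_sum2 (m : ℕ) :
    ∑ π ∈ Finset.univ.filter (fun π : Equiv.Perm (Fin (2 * m)) =>
        isDerangement π ∧ avoids π ![3,2,1] ∧ excStat π = m ∧
          ∀ i, 1 ≤ i → i ≤ 2 * m → ¬ (pval π.symm i < i ∧ i < pval π i)),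
      Polynomial.X ^ invStat π
    = ∑ EA ∈ Finset.univ.filter
        (fun EA : Finset (Fin (2 * m)) × Finset (Fin (2 * m)) =>
          Valid (2 * m) EA ∧ EA.2 = EA.1ᶜ),
      (Polynomial.X : Polynomial ℤ) ^ pairW EA := by
  refine Finset.sum_bij' (fun π _ => (ESet π, ASet π))
    (fun EA _ => buildPerm EA.1 EA.2) ?_ ?_ ?_ ?_ ?_
  · intro π hπ
    simp only [Finset.mem_filter, Finset.mem_univ, true_and] at hπ ⊢
    obtain ⟨hd, hav, hexc, hnde⟩ := hπ
    refine ⟨valid_of_derangement hd, ?_⟩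
    rw [compl_iff_card_inter (card_ESet_eq π)]
    refine ⟨?_, nde_iff_inter.mp hnde⟩
    rw [← excStat_ESet]
    exact hexc
  · intro EA hEA
    simp only [Finset.mem_filter, Finset.mem_univ, true_and] at hEA ⊢
    obtain ⟨hv, hcompl⟩ := hEA
    have hd := buildPerm_derangement hv
    refine ⟨hd, ?_, ?_, ?_⟩
    · rw [avoids_iff_fin]
      exact buildPerm_avoids hv
    · rw [excStat_ESet, ESet_buildPerm hv]
      have := (compl_iff_card_inter hv.1).mp hcompl
      exact this.1
    · rw [nde_iff_inter, ESet_buildPerm hv, ASet_buildPerm hv]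
      exact ((compl_iff_card_inter hv.1).mp hcompl).2
  · intro π hπ
    simp only [Finset.mem_filter, Finset.mem_univ, true_and] at hπ
    exact buildPerm_eq hπ.1 ((avoids_iff_fin π).mp hπ.2.1)
  · intro EA hEA
    simp only [Finset.mem_filter, Finset.mem_univ, true_and] at hEA
    exact Prod.ext (ESet_buildPerm hEA.1) (ASet_buildPerm hEA.1)
  · intro π hπ
    simp only [Finset.mem_filter, Finset.mem_univ, true_and] at hπ
    rw [invStat_pairW hπ.1 ((avoids_iff_fin π).mp hπ.2.1)]

end Transfer

end Stmt5

/-- the (−1)-phenomenon for (exc, inv) on 321-avoiding derangements. -/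
theorem stmt5 :
    (∀ n : ℕ, Odd n →
      (∑ π ∈ Finset.univ.filter
          (fun π : Equiv.Perm (Fin n) => isDerangement π ∧ avoids π ![3,2,1]),
        (-1 : Polynomial ℤ) ^ excStat π * Polynomial.X ^ invStat π) = 0) ∧
    (∀ m : ℕ,
      (∑ π ∈ Finset.univ.filter
          (fun π : Equiv.Perm (Fin (2 * m)) => isDerangement π ∧ avoids π ![3,2,1]),
        (-1 : Polynomial ℤ) ^ excStat π * Polynomial.X ^ invStat π)
      = (-1 : Polynomial ℤ) ^ m *
        ∑ π ∈ Finset.univ.filter (fun π : Equiv.Perm (Fin (2 * m)) =>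
            isDerangement π ∧ avoids π ![3,2,1] ∧ excStat π = m ∧
              ∀ i, 1 ≤ i → i ≤ 2 * m → ¬ (pval π.symm i < i ∧ i < pval π i)),
          Polynomial.X ^ invStat π) := by
  constructor
  · intro n hn
    rw [Stmt5.perm_sum_eq_pair_sum n, Stmt5.pair_sum_eq n]
    have hempty : Finset.univ.filter (fun EA : Finset (Fin n) × Finset (Fin n) =>
        Stmt5.Valid n EA ∧ EA.2 = EA.1ᶜ) = ∅ := by
      rw [Finset.eq_empty_iff_forall_notMem]
      intro EA hEA
      simp only [Finset.mem_filter, Finset.mem_univ, true_and] at hEA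
      obtain ⟨hv, hc⟩ := hEA
      have h1 := hv.1
      rw [hc] at h1
      have h2 : (EA.1ᶜ).card = Fintype.card (Fin n) - EA.1.card := Finset.card_compl _
      have h3 : EA.1.card ≤ Fintype.card (Fin n) := Finset.card_le_univ _
      rw [Fintype.card_fin] at h2 h3
      obtain ⟨k, hk⟩ := hn
      omega
    rw [hempty, Finset.sum_empty]
  · intro m
    rw [Stmt5.perm_sum_eq_pair_sum (2 * m), Stmt5.pair_sum_eq (2 * m),
      Stmt5.perm_sum_eq_pair_sum2 m, Finset.mul_sum]
    apply Finset.sum_congr rfl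
    intro EA hEA
    simp only [Finset.mem_filter, Finset.mem_univ, true_and] at hEA
    have hm := (Stmt5.compl_iff_card_inter hEA.1.1).mp hEA.2
    rw [hm.1]
end

section
/- For every n ≥ 1 and every permutation π ∈ S_n: π avoids the pattern 321 if and only if ine π = 0, where ine π = nest(π^{-1}). -/
open scoped Classical
open Finset

/-- auxiliary: explicit 321 occurrence -/
def Has321 {n : ℕ} (σ : Equiv.Perm (Fin n)) : Prop :=
  ∃ a b c : Fin n, a < b ∧ b < c ∧ σ c < σ b ∧ σ b < σ a

lemma pval_eq {n : ℕ} (σ : Equiv.Perm (Fin n)) (i : ℕ) (h1 : 1 ≤ i) (h2 : i ≤ n) :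
    pval σ i = (σ ⟨i - 1, by omega⟩).val + 1 := by
  simp [pval, pvalB, h1, h2]

lemma has321_symm {n : ℕ} (σ : Equiv.Perm (Fin n)) (h : Has321 σ) : Has321 σ.symm := by
  obtain ⟨a, b, c, hab, hbc, h1, h2⟩ := h
  exact ⟨σ c, σ b, σ a, h1, h2, by simpa using hab, by simpa using hbc⟩

lemma existsLess {n : ℕ} (σ : Equiv.Perm (Fin n)) (a b : Fin n) (hab : a < b)
    (hb : b ≤ σ b) (hba : σ b < σ a) : ∃ c, b < c ∧ σ c < σ b := by
  by_contra h
  push_neg at h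
  have hsub : (insert a (Finset.Ioi b)).image σ ⊆ Finset.Ioi b := by
    intro v hv
    simp only [Finset.mem_image, Finset.mem_insert, Finset.mem_Ioi] at hv ⊢
    obtain ⟨x, hx, rfl⟩ := hv
    rcases hx with rfl | hx
    · exact lt_of_le_of_lt hb hba
    · have hle := h x hx
      have hne : σ b ≠ σ x := fun he => (ne_of_lt hx) (σ.injective he)
      exact lt_of_le_of_lt hb (lt_of_le_of_ne hle hne)
  have hcard := Finset.card_le_card hsub
  rw [Finset.card_image_of_injective _ σ.injective,
      Finset.card_insert_of_notMem (by simp [hab.not_gt])] at hcard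
  omega

lemma existsGreater {n : ℕ} (σ : Equiv.Perm (Fin n)) (a b : Fin n) (hab : a < b)
    (h1 : σ b < σ a) (h2 : σ a < a) : ∃ c, c < a ∧ σ a < σ c := by
  by_contra h
  push_neg at h
  have hsub : (insert b (Finset.Iio a)).image σ ⊆ Finset.Iio (σ a) := by
    intro v hv
    simp only [Finset.mem_image, Finset.mem_insert, Finset.mem_Iio] at hv ⊢
    obtain ⟨x, hx, rfl⟩ := hv
    rcases hx with rfl | hx
    · exact h1
    · have hle := h x hx
      have hne : σ x ≠ σ a := fun he => (ne_of_lt hx) (σ.injective he)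
      exact lt_of_le_of_ne hle hne
  have hcard := Finset.card_le_card hsub
  rw [Finset.card_image_of_injective _ σ.injective,
      Finset.card_insert_of_notMem (by simp [hab.not_gt])] at hcard
  rw [Fin.card_Iio, Fin.card_Iio] at hcard
  have := h2
  rw [Fin.lt_def] at this
  omega

lemma not_avoids_iff {n : ℕ} (π : Equiv.Perm (Fin n)) :
    ¬ avoids π ![3,2,1] ↔ Has321 π := by
  unfold avoids Has321
  rw [not_not]
  constructor
  · rintro ⟨f, hf⟩
    refine ⟨f 0, f 1, f 2, f.strictMono (by decide), f.strictMono (by decide), ?_, ?_⟩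
    · exact (hf 2 1).mp (by decide)
    · exact (hf 1 0).mp (by norm_num)
  · rintro ⟨a, b, c, hab, hbc, h1, h2⟩
    have hm : StrictMono ![a, b, c] := by
      rw [Fin.strictMono_iff_lt_succ]
      rintro ⟨iv, hi⟩
      interval_cases iv
      · exact hab
      · exact hbc
    refine ⟨OrderEmbedding.ofStrictMono _ hm, ?_⟩
    simp only [OrderEmbedding.coe_ofStrictMono]
    rintro ⟨xv, hx⟩ ⟨yv, hy⟩
    interval_cases xv <;> interval_cases yv
    · exact iff_of_false (lt_irrefl _) (lt_irrefl _)
    · exact iff_of_false (by norm_num : ¬ (3:ℕ) < 2) h2.asymm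
    · exact iff_of_false (by norm_num : ¬ (3:ℕ) < 1) (h1.trans h2).asymm
    · exact iff_of_true (by norm_num : (2:ℕ) < 3) h2
    · exact iff_of_false (lt_irrefl _) (lt_irrefl _)
    · exact iff_of_false (by norm_num : ¬ (2:ℕ) < 1) h1.asymm
    · exact iff_of_true (by norm_num : (1:ℕ) < 3) (h1.trans h2)
    · exact iff_of_true (by norm_num : (1:ℕ) < 2) h1
    · exact iff_of_false (lt_irrefl _) (lt_irrefl _)

lemma nest_zero_iff {n : ℕ} (σ : Equiv.Perm (Fin n)) :
    nestStat σ = 0 ↔ ¬ Has321 σ := by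
  constructor
  · intro h h321
    obtain ⟨a, b, c, hab, hbc, h1, h2⟩ := h321
    rw [Fin.lt_def] at hab hbc h1 h2
    unfold nestStat at h
    rw [Nat.add_eq_zero, Finset.card_eq_zero, Finset.card_eq_zero,
      Finset.filter_eq_empty_iff, Finset.filter_eq_empty_iff] at h
    obtain ⟨hA, hB⟩ := h
    by_cases hb : b.val ≤ (σ b).val
    · refine hA (show ((a.val + 1 : ℕ), (b.val + 1 : ℕ)) ∈ _ from ?_) ?_
      · have := a.isLt; have := b.isLt
        simp only [Finset.mem_product, Finset.mem_Icc]; omega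
      · have e1 : pval σ (a.val + 1) = (σ a).val + 1 := by
          rw [pval_eq σ _ (by omega) (by omega)]; congr 1
        have e2 : pval σ (b.val + 1) = (σ b).val + 1 := by
          rw [pval_eq σ _ (by omega) (by omega)]; congr 1
        refine ⟨by omega, ?_, ?_⟩ <;> simp only [e1, e2] <;> omega
    · refine hB (show ((b.val + 1 : ℕ), (c.val + 1 : ℕ)) ∈ _ from ?_) ?_
      · have := b.isLt; have := c.isLt
        simp only [Finset.mem_product, Finset.mem_Icc]; omega
      · have e1 : pval σ (b.val + 1) = (σ b).val + 1 := by
          rw [pval_eq σ _ (by omega) (by omega)]; congr 1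
        have e2 : pval σ (c.val + 1) = (σ c).val + 1 := by
          rw [pval_eq σ _ (by omega) (by omega)]; congr 1
        refine ⟨by omega, ?_, ?_⟩ <;> simp only [e1, e2] <;> omega
  · intro hno
    unfold nestStat
    rw [Nat.add_eq_zero, Finset.card_eq_zero, Finset.card_eq_zero,
      Finset.filter_eq_empty_iff, Finset.filter_eq_empty_iff]
    constructor
    · rintro ⟨i, j⟩ hp ⟨hij, hj, hji⟩
      simp only [Finset.mem_product, Finset.mem_Icc] at hp
      obtain ⟨⟨hi1, hi2⟩, hj1, hj2⟩ := hp
      dsimp only at hij hj hji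
      rw [pval_eq σ j hj1 hj2] at hj
      rw [pval_eq σ i hi1 hi2, pval_eq σ j hj1 hj2] at hji
      have ha : i - 1 < n := by omega
      have hb : j - 1 < n := by omega
      have hj' : j ≤ (σ ⟨j - 1, hb⟩).val + 1 := hj
      have hji' : (σ ⟨j - 1, hb⟩).val + 1 < (σ ⟨i - 1, ha⟩).val + 1 := hji
      have hab : (⟨i - 1, ha⟩ : Fin n) < ⟨j - 1, hb⟩ := by
        rw [Fin.mk_lt_mk]; omega
      have hbσ : (⟨j - 1, hb⟩ : Fin n) ≤ σ ⟨j - 1, hb⟩ := by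
        rw [Fin.le_def]; exact (by omega : j - 1 ≤ (σ ⟨j - 1, hb⟩).val)
      have hσ : σ ⟨j - 1, hb⟩ < σ ⟨i - 1, ha⟩ := by rw [Fin.lt_def]; omega
      obtain ⟨c, hbc, hc⟩ := existsLess σ _ _ hab hbσ hσ
      exact hno ⟨_, _, c, hab, hbc, hc, hσ⟩
    · rintro ⟨i, j⟩ hp ⟨hij, hji, hii⟩
      simp only [Finset.mem_product, Finset.mem_Icc] at hp
      obtain ⟨⟨hi1, hi2⟩, hj1, hj2⟩ := hp
      dsimp only at hij hji hii
      rw [pval_eq σ i hi1 hi2] at hii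
      rw [pval_eq σ i hi1 hi2, pval_eq σ j hj1 hj2] at hji
      have ha : i - 1 < n := by omega
      have hb : j - 1 < n := by omega
      have hji' : (σ ⟨j - 1, hb⟩).val + 1 < (σ ⟨i - 1, ha⟩).val + 1 := hji
      have hii' : (σ ⟨i - 1, ha⟩).val + 1 < i := hii
      have hab : (⟨i - 1, ha⟩ : Fin n) < ⟨j - 1, hb⟩ := by
        rw [Fin.mk_lt_mk]; omega
      have hσ : σ ⟨j - 1, hb⟩ < σ ⟨i - 1, ha⟩ := by rw [Fin.lt_def]; omega
      have hσa : σ ⟨i - 1, ha⟩ < ⟨i - 1, ha⟩ := by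
        rw [Fin.lt_def]; exact (by omega : (σ ⟨i - 1, ha⟩).val < i - 1)
      obtain ⟨c, hca, hc⟩ := existsGreater σ _ _ hab hσ hσa
      exact hno ⟨c, _, _, hca, hab, hσ, hc⟩

/-- π avoids 321 iff its inverse nesting number is 0. -/
theorem stmt7 (n : ℕ) (hn : 1 ≤ n) (π : Equiv.Perm (Fin n)) :
    avoids π ![3,2,1] ↔ nestStat π.symm = 0 := by
  have hiff : Has321 π ↔ Has321 π.symm :=
    ⟨has321_symm π, fun h => by have := has321_symm _ h; rwa [Equiv.symm_symm] at this⟩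
  rw [nest_zero_iff, ← hiff, ← not_avoids_iff, not_not]
end
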